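/- arXiv:1206.5987 — 5 statements merged into one kernel-verified Lean document; each statement's English description precedes it below -/
import Mathlib

section
/- Let k ∈ ℝ, let D ⊂ ℝ³ be a bounded open set, and let φ : ℝ³ → ℂ be continuously differentiable with compact support contained in D. Then for every x ∈ ℝ³ the function x ↦ ∫_D g(x,y)φ(y) dy is differentiable and ∇ₓ ∫_D g(x,y) φ(y) dy = ∫_D g(x,y) ∇φ(y) dy. -/
/- STATEMENT 2: For k ∈ ℝ, D ⊂ ℝ³ bounded open, φ : ℝ³ → ℂ of class C¹ with
compact support contained in D, the map x ↦ ∫_D g(x,y)φ(y) dy is differentiable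
and its gradient equals ∫_D g(x,y)∇φ(y) dy (componentwise), where
g(x,y) = e^{ik|x−y|}/(4π|x−y|). -/

noncomputable section

open Real Complex MeasureTheory

abbrev R3 : Type := EuclideanSpace ℝ (Fin 3)

/-- Partial derivative ∂ᵢ of a scalar function. -/
def pd (i : Fin 3) (f : R3 → ℂ) (x : R3) : ℂ :=
  fderiv ℝ f x (EuclideanSpace.single i (1 : ℝ))

/-- The weakly singular kernel g(x,y) = e^{ik|x−y|}/(4π|x−y|). -/
def g (k : ℝ) (x y : R3) : ℂ :=
  Complex.exp (Complex.I * (k : ℂ) * (‖x - y‖ : ℝ)) / (4 * (Real.pi : ℂ) * (‖x - y‖ : ℝ))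

open Metric Set Module Convolution

/-- The function `‖z‖⁻¹` is integrable on balls in `ℝ³`. -/
lemma integrableOn_inv_norm_ball (R : ℝ) :
    IntegrableOn (fun z : R3 => ‖z‖⁻¹) (Metric.ball (0:R3) R) volume := by
  set n : ℕ := finrank ℝ R3 - 1 with hn
  have hn2 : n = 2 := by
    rw [hn, finrank_euclideanSpace, Fintype.card_fin]
  set f : ℝ → ℝ := (Set.Ioo 0 R).indicator (fun y => y⁻¹) with hfdef
  have hfmeas : Measurable f := measurable_inv.indicator measurableSet_Ioo
  -- integrability with respect to volumeIoiPow n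
  have h2 : Integrable (fun y : Ioi (0:ℝ) => f y) (Measure.volumeIoiPow n) := by
    rw [Measure.volumeIoiPow, integrable_withDensity_iff
      (by exact (measurable_subtype_coe.pow_const _).ennreal_ofReal)
      (Filter.Eventually.of_forall fun y => ENNReal.ofReal_lt_top)]
    have hresteq : (volume.comap (Subtype.val : Ioi (0:ℝ) → ℝ)).map Subtype.val
        = volume.restrict (Ioi (0:ℝ)) := map_comap_subtype_coe measurableSet_Ioi _
    have hiff := (MeasurableEmbedding.subtype_coe measurableSet_Ioi).integrable_map_iff
      (g := fun y : ℝ => f y * (ENNReal.ofReal (y ^ n)).toReal)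
      (μ := volume.comap (Subtype.val : Ioi (0:ℝ) → ℝ))
    rw [hresteq] at hiff
    have hind : Integrable ((Ioo (0:ℝ) R).indicator (fun y : ℝ => y)) volume :=
      (integrable_indicator_iff measurableSet_Ioo).2
        ((continuous_id.integrableOn_Icc (a := 0) (b := R)).mono_set Ioo_subset_Icc_self)
    have key : IntegrableOn (fun y : ℝ => f y * (ENNReal.ofReal (y ^ n)).toReal)
        (Ioi (0:ℝ)) volume := by
      refine (hind.integrableOn).congr_fun (fun y hy => ?_) measurableSet_Ioi
      have hy0 : (0:ℝ) < y := hy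
      by_cases hmem : y ∈ Ioo (0:ℝ) R
      · simp only [hfdef, indicator_of_mem hmem, hn2,
          ENNReal.toReal_ofReal (by positivity : (0:ℝ) ≤ y ^ 2)]
        field_simp
      · simp [hfdef, indicator_of_notMem hmem]
    exact hiff.1 key
  -- transfer via polar-like decomposition
  have hconst : Integrable (fun _ : sphere (0:R3) 1 => (1:ℝ)) (volume : Measure R3).toSphere :=
    integrable_const _
  have hprod : Integrable (fun p : sphere (0:R3) 1 × Ioi (0:ℝ) => f p.2)
      ((volume : Measure R3).toSphere.prod (Measure.volumeIoiPow n)) := by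
    simpa using hconst.mul_prod h2
  have hmp := (volume : Measure R3).measurePreserving_homeomorphUnitSphereProd
  have hcomp := (hmp.integrable_comp_emb (Homeomorph.measurableEmbedding _)).2 hprod
  have hcomp' : Integrable (fun x : ({0}ᶜ : Set R3) => f ‖(x : R3)‖)
      (volume.comap Subtype.val) := by
    refine hcomp.congr ?_
    refine Filter.Eventually.of_forall fun x => ?_
    simp [Function.comp]
  have hiff2 := (MeasurableEmbedding.subtype_coe
      (measurableSet_singleton (0:R3)).compl).integrable_map_iff
      (g := fun x : R3 => f ‖x‖) (μ := volume.comap (Subtype.val : ({0}ᶜ : Set R3) → R3))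
  rw [map_comap_subtype_coe (measurableSet_singleton (0:R3)).compl,
    MeasureTheory.restrict_compl_singleton] at hiff2
  have hglob : Integrable (fun x : R3 => f ‖x‖) volume := hiff2.2 hcomp'
  refine (hglob.integrableOn).congr_fun (fun z hz => ?_) measurableSet_ball
  rcases eq_or_ne z 0 with rfl | hz0
  · simp [hfdef]
  · have : ‖z‖ ∈ Ioo (0:ℝ) R := ⟨norm_pos_iff.2 hz0, by simpa using hz⟩
    simp [hfdef, indicator_of_mem this]

/-- The kernel as a function of the difference. -/
def Gk (k : ℝ) (z : R3) : ℂ :=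
  Complex.exp (Complex.I * (k : ℂ) * (‖z‖ : ℝ)) / (4 * (Real.pi : ℂ) * (‖z‖ : ℝ))

lemma g_eq (k : ℝ) (x y : R3) : g k x y = Gk k (x - y) := rfl

lemma norm_Gk (k : ℝ) (z : R3) : ‖Gk k z‖ = (4 * Real.pi)⁻¹ * ‖z‖⁻¹ := by
  rcases eq_or_ne z 0 with rfl | hz
  · simp [Gk]
  · rw [Gk, norm_div]
    have h1 : ‖Complex.exp (Complex.I * (k : ℂ) * (‖z‖ : ℝ))‖ = 1 := by
      rw [Complex.norm_exp]
      have : (Complex.I * (k : ℂ) * (‖z‖ : ℝ)).re = 0 := by simp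
      rw [this, Real.exp_zero]
    rw [h1]
    have h2 : ‖(4 : ℂ) * (Real.pi : ℂ) * (‖z‖ : ℝ)‖ = 4 * Real.pi * ‖z‖ := by
      rw [norm_mul, norm_mul]
      simp [_root_.abs_of_nonneg Real.pi_pos.le, Complex.norm_real]
    rw [h2, one_div, mul_inv]

lemma measurable_Gk (k : ℝ) : Measurable (Gk k) := by
  unfold Gk
  fun_prop

lemma locallyIntegrable_Gk (k : ℝ) : LocallyIntegrable (Gk k) volume := by
  rw [MeasureTheory.locallyIntegrable_iff]
  intro K hK
  obtain ⟨R, hR⟩ : ∃ R : ℝ, K ⊆ ball (0:R3) R := by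
    exact hK.isBounded.subset_ball (0:R3)
  refine (IntegrableOn.mono_set ?_ hR)
  have hint : IntegrableOn (fun z : R3 => (4 * Real.pi)⁻¹ * ‖z‖⁻¹) (ball (0:R3) R) volume :=
    (integrableOn_inv_norm_ball R).const_mul _
  refine hint.integrable.mono ((measurable_Gk k).aestronglyMeasurable) ?_
  refine Filter.Eventually.of_forall fun z => ?_
  rw [norm_Gk]
  have : (0:ℝ) ≤ (4 * Real.pi)⁻¹ * ‖z‖⁻¹ := by positivity
  rw [Real.norm_of_nonneg this]

abbrev Lmul : ℂ →L[ℝ] ℂ →L[ℝ] ℂ := ContinuousLinearMap.mul ℝ ℂ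

lemma conv_eq (k : ℝ) (D : Set R3) (ψ : R3 → ℂ) (hψ : ∀ y ∉ D, ψ y = 0) (x : R3) :
    ∫ y in D, g k x y * ψ y = (convolution (Gk k) ψ Lmul volume) x := by
  have h1 : ∫ y in D, g k x y * ψ y = ∫ y, Gk k (x - y) * ψ y := by
    rw [setIntegral_eq_integral_of_forall_compl_eq_zero fun y hy => by
      rw [hψ y hy, mul_zero]]
    simp_rw [g_eq]
  rw [h1, ← integral_sub_left_eq_self (fun y => Gk k (x - y) * ψ y) volume x,
    convolution_def]
  simp [sub_sub_cancel]

theorem grad_of_single_layer_moves_to_density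
    (k : ℝ) (D : Set R3) (hD : IsOpen D) (hDb : Bornology.IsBounded D)
    (φ : R3 → ℂ) (hφ : ContDiff ℝ 1 φ) (hφc : HasCompactSupport φ)
    (hφD : tsupport φ ⊆ D) :
    ∀ x : R3,
      DifferentiableAt ℝ (fun z => ∫ y in D, g k z y * φ y) x ∧
      ∀ i : Fin 3,
        pd i (fun z => ∫ y in D, g k z y * φ y) x = ∫ y in D, g k x y * pd i φ y := by
  intro x
  have hφ0 : ∀ y ∉ D, φ y = 0 := fun y hy =>
    image_eq_zero_of_notMem_tsupport (fun h => hy (hφD h))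
  have hfun : (fun z => ∫ y in D, g k z y * φ y) = convolution (Gk k) φ Lmul volume :=
    funext fun z => conv_eq k D φ hφ0 z
  have hder := hφc.hasFDerivAt_convolution_right Lmul (locallyIntegrable_Gk k) hφ x
  constructor
  · rw [hfun]; exact hder.differentiableAt
  · intro i
    have hpd0 : ∀ y ∉ D, (fun a => fderiv ℝ φ a (EuclideanSpace.single i (1:ℝ))) y = 0 := by
      intro y hy
      have h1 : y ∉ Function.support (fderiv ℝ φ) := by
        intro h
        exact hy (hφD ((support_fderiv_subset ℝ) h))
      have h2 : fderiv ℝ φ y = 0 := Function.notMem_support.mp h1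
      simp [h2]
    show fderiv ℝ (fun z => ∫ y in D, g k z y * φ y) x (EuclideanSpace.single i (1:ℝ)) = _
    rw [hfun, hder.fderiv,
      convolution_precompR_apply Lmul (locallyIntegrable_Gk k) (hφc.fderiv (𝕜 := ℝ))
        (hφ.continuous_fderiv one_ne_zero) x (EuclideanSpace.single i (1:ℝ)),
      ← conv_eq k D (fun a => fderiv ℝ φ a (EuclideanSpace.single i (1:ℝ))) hpd0 x]
    rfl
end
end

section
/- Let K² : ℝ³ → ℂ be twice continuously differentiable with K²(x) ≠ 0 for all x, and let E : ℝ³ → ℂ³ be three times continuously differentiable. Suppose that for all x ∈ ℝ³: curl(curl E)(x) − ∇( (K²(x)·div E(x) + ∇K²(x)·E(x)) / K²(x) ) = K²(x)·E(x). Then the scalar function ψ(x) := div(K²·E)(x) / K²(x) = (K²(x)·div E(x) + ∇K²(x)·E(x)) / K²(x) satisfies Δψ(x) + K²(x)·ψ(x) = 0 for all x ∈ ℝ³. -/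
noncomputable section

open Real Complex

def lap (f : R3 → ℂ) (x : R3) : ℂ := ∑ i, pd i (pd i f) x

def vdiv (F : R3 → Fin 3 → ℂ) (x : R3) : ℂ := ∑ i, pd i (fun y => F y i) x

def curl (F : R3 → Fin 3 → ℂ) (x : R3) : Fin 3 → ℂ :=
  ![pd 1 (fun y => F y 2) x - pd 2 (fun y => F y 1) x,
    pd 2 (fun y => F y 0) x - pd 0 (fun y => F y 2) x,
    pd 0 (fun y => F y 1) x - pd 1 (fun y => F y 0) x]

def dotc (u v : Fin 3 → ℂ) : ℂ := ∑ i, u i * v i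

def grad (f : R3 → ℂ) (x : R3) : Fin 3 → ℂ := fun i => pd i f x

lemma pd_contDiff {n : ℕ} {f : R3 → ℂ} (hf : ContDiff ℝ (n + 1 : ℕ) f) (i : Fin 3) :
    ContDiff ℝ n (pd i f) := by
  have h : ContDiff ℝ n (fderiv ℝ f) := hf.fderiv_right (by exact_mod_cast le_rfl)
  exact h.clm_apply contDiff_const

lemma pd_sub (i : Fin 3) {f g : R3 → ℂ} {x : R3} (hf : DifferentiableAt ℝ f x)
    (hg : DifferentiableAt ℝ g x) :
    pd i (fun y => f y - g y) x = pd i f x - pd i g x := by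
  unfold pd
  rw [fderiv_fun_sub hf hg]; rfl

lemma pd_mul (i : Fin 3) {f g : R3 → ℂ} {x : R3} (hf : DifferentiableAt ℝ f x)
    (hg : DifferentiableAt ℝ g x) :
    pd i (fun y => f y * g y) x = pd i f x * g x + f x * pd i g x := by
  unfold pd
  rw [fderiv_fun_mul hf hg]
  simp [smul_eq_mul]
  ring

lemma pd_comm {f : R3 → ℂ} (hf : ContDiff ℝ 2 f) (i j : Fin 3) (x : R3) :
    pd i (pd j f) x = pd j (pd i f) x := by
  have hsymm : IsSymmSndFDerivAt ℝ f x := hf.contDiffAt.isSymmSndFDerivAt (by norm_num)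
  have hd : DifferentiableAt ℝ (fderiv ℝ f) x :=
    (hf.fderiv_right (m := 1) (by norm_num)).differentiable (by norm_num) x
  have h1 : ∀ v w : R3, fderiv ℝ (fun y => fderiv ℝ f y w) x v
      = fderiv ℝ (fderiv ℝ f) x v w := by
    intro v w
    rw [fderiv_clm_apply hd (differentiableAt_const _)]
    simp
  unfold pd
  rw [h1, h1, hsymm]

lemma curl_comp0 (F : R3 → Fin 3 → ℂ) :
    (fun y => curl F y 0) = fun y => pd 1 (fun z => F z 2) y - pd 2 (fun z => F z 1) y := by
  funext y; simp [curl]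

lemma curl_comp1 (F : R3 → Fin 3 → ℂ) :
    (fun y => curl F y 1) = fun y => pd 2 (fun z => F z 0) y - pd 0 (fun z => F z 2) y := by
  funext y; simp [curl]

lemma curl_comp2 (F : R3 → Fin 3 → ℂ) :
    (fun y => curl F y 2) = fun y => pd 0 (fun z => F z 1) y - pd 1 (fun z => F z 0) y := by
  funext y; simp [curl]

/-- Divergence of a curl vanishes for C² fields. -/
lemma vdiv_curl (F : R3 → Fin 3 → ℂ) (hF : ∀ i, ContDiff ℝ 2 (fun y => F y i)) (x : R3) :
    vdiv (curl F) x = 0 := by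
  have hpd : ∀ i j : Fin 3, Differentiable ℝ (pd j (fun y => F y i)) := fun i j =>
    (pd_contDiff (n := 1) (by exact_mod_cast hF i) j).differentiable (by norm_num)
  unfold vdiv
  rw [Fin.sum_univ_three, curl_comp0, curl_comp1, curl_comp2,
    pd_sub 0 ((hpd 2 1) x) ((hpd 1 2) x),
    pd_sub 1 ((hpd 0 2) x) ((hpd 2 0) x),
    pd_sub 2 ((hpd 1 0) x) ((hpd 0 1) x),
    pd_comm (hF 2) 0 1 x, pd_comm (hF 1) 0 2 x, pd_comm (hF 0) 1 2 x]
  ring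

theorem psi_satisfies_helmholtz
    (K2 : R3 → ℂ) (E : R3 → Fin 3 → ℂ)
    (hK2 : ContDiff ℝ 2 K2) (hK2ne : ∀ x, K2 x ≠ 0) (hE : ContDiff ℝ 3 E)
    (heq : ∀ x, ∀ i : Fin 3,
      curl (curl E) x i
        - pd i (fun y => (K2 y * vdiv E y + dotc (grad K2 y) (E y)) / K2 y) x
      = K2 x * E x i) :
    ∀ x, lap (fun y => (K2 y * vdiv E y + dotc (grad K2 y) (E y)) / K2 y) x
        + K2 x * ((K2 x * vdiv E x + dotc (grad K2 x) (E x)) / K2 x) = 0 := by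
  intro x
  set ψ : R3 → ℂ := fun y => (K2 y * vdiv E y + dotc (grad K2 y) (E y)) / K2 y with hψ
  have hEi : ∀ i, ContDiff ℝ 3 (fun y => E y i) := contDiff_pi.mp hE
  -- curl E components are C²
  have hcEi : ∀ i, ContDiff ℝ 2 (fun y => curl E y i) := by
    intro i
    fin_cases i
    · show ContDiff ℝ 2 fun y => curl E y 0
      rw [curl_comp0]
      exact (pd_contDiff (n := 2) (by exact_mod_cast hEi 2) 1).sub
        (pd_contDiff (n := 2) (by exact_mod_cast hEi 1) 2)
    · show ContDiff ℝ 2 fun y => curl E y 1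
      rw [curl_comp1]
      exact (pd_contDiff (n := 2) (by exact_mod_cast hEi 0) 2).sub
        (pd_contDiff (n := 2) (by exact_mod_cast hEi 2) 0)
    · show ContDiff ℝ 2 fun y => curl E y 2
      rw [curl_comp2]
      exact (pd_contDiff (n := 2) (by exact_mod_cast hEi 1) 0).sub
        (pd_contDiff (n := 2) (by exact_mod_cast hEi 0) 1)
  -- curl (curl E) components are differentiable
  have hccEi : ∀ i, Differentiable ℝ (fun y => curl (curl E) y i) := by
    have h1 : ∀ i j : Fin 3, Differentiable ℝ (pd j (fun y => curl E y i)) := fun i j =>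
      (pd_contDiff (n := 1) (by exact_mod_cast hcEi i) j).differentiable (by norm_num)
    intro i
    fin_cases i
    · show Differentiable ℝ fun y => curl (curl E) y 0
      rw [curl_comp0 (curl E)]; exact (h1 2 1).sub (h1 1 2)
    · show Differentiable ℝ fun y => curl (curl E) y 1
      rw [curl_comp1 (curl E)]; exact (h1 0 2).sub (h1 2 0)
    · show Differentiable ℝ fun y => curl (curl E) y 2
      rw [curl_comp2 (curl E)]; exact (h1 1 0).sub (h1 0 1)
  have hK2d : Differentiable ℝ K2 := hK2.differentiable (by norm_num)
  have hEd : ∀ i, Differentiable ℝ (fun y => E y i) := fun i =>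
    (hEi i).differentiable (by norm_num)
  -- gradient of ψ from the hypothesis
  have hgrad : ∀ i : Fin 3, pd i ψ = fun y => curl (curl E) y i - K2 y * E y i := by
    intro i
    funext y
    linear_combination -(heq y i)
  -- second partials of ψ
  have key : ∀ i : Fin 3, pd i (pd i ψ) x
      = pd i (fun y => curl (curl E) y i) x - pd i (fun y => K2 y * E y i) x := by
    intro i
    rw [hgrad i]
    exact pd_sub i ((hccEi i) x) ((hK2d.mul (hEd i)) x)
  -- divergence of K2 • E
  have hdivK2E : ∀ i : Fin 3, pd i (fun y => K2 y * E y i) x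
      = pd i K2 x * E x i + K2 x * pd i (fun y => E y i) x := fun i =>
    pd_mul i (hK2d x) ((hEd i) x)
  have hlap : lap ψ x = vdiv (curl (curl E)) x
      - (K2 x * vdiv E x + dotc (grad K2 x) (E x)) := by
    unfold lap vdiv dotc grad
    rw [Fin.sum_univ_three, Fin.sum_univ_three, Fin.sum_univ_three, Fin.sum_univ_three,
      key 0, key 1, key 2, hdivK2E 0, hdivK2E 1, hdivK2E 2]
    ring
  have hzero : vdiv (curl (curl E)) x = 0 := vdiv_curl (curl E) hcEi x
  rw [hlap, hzero]
  rw [mul_div_cancel₀ _ (hK2ne x)]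
  ring
end
end

section
/- Let k ∈ ℝ and R > 0. There exist constants C > 0 and R₁ > R such that for all y ∈ ℝ³ with |y| ≤ R and all x ∈ ℝ³ with |x| ≥ R₁: | e^{ik|x−y|}/(4π|x−y|) − (e^{ik|x|}/(4π|x|))·e^{−ik(x/|x|)·y} | ≤ C/|x|². -/
/- STATEMENT 12: Asymptotics of the kernel: for k ∈ ℝ and R > 0 there are
C > 0 and R₁ > R such that for |y| ≤ R and |x| ≥ R₁,
| e^{ik|x−y|}/(4π|x−y|) − (e^{ik|x|}/(4π|x|)) e^{−ik(x/|x|)·y} | ≤ C/|x|². -/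

noncomputable section

open Real Complex

lemma exp_I_sub_one_le (θ : ℝ) :
    ‖Complex.exp (Complex.I * θ) - 1‖ ≤ |θ| := by
  have h : Complex.I * (θ:ℂ) = (θ:ℂ) * Complex.I := by ring
  rw [h, Complex.exp_mul_I]
  have : (Complex.cos θ + Complex.sin θ * Complex.I - 1 : ℂ)
      = Complex.ofReal (Real.cos θ - 1) + Complex.ofReal (Real.sin θ) * Complex.I := by
    push_cast [Complex.ofReal_cos, Complex.ofReal_sin]
    ring
  rw [this]
  rw [Complex.norm_def, Complex.normSq_add_mul_I]
  have hkey : (Real.cos θ - 1)^2 + (Real.sin θ)^2 = (2 * Real.sin (θ/2))^2 := by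
    have h1 : Real.sin (θ/2)^2 = (1 - Real.cos θ)/2 := by
      have h := Real.abs_sin_half θ
      have hnn : (0:ℝ) ≤ (1 - Real.cos θ)/2 := by nlinarith [Real.cos_le_one θ]
      calc Real.sin (θ/2)^2 = |Real.sin (θ/2)|^2 := (_root_.sq_abs _).symm
        _ = (1 - Real.cos θ)/2 := by rw [h, Real.sq_sqrt hnn]
    have h2 : Real.sin θ ^2 + Real.cos θ^2 = 1 := Real.sin_sq_add_cos_sq θ
    nlinarith
  rw [hkey, Real.sqrt_sq_eq_abs]
  calc |2 * Real.sin (θ/2)| = 2 * |Real.sin (θ/2)| := by rw [abs_mul]; norm_num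
    _ ≤ 2 * |θ/2| := by have := Real.abs_sin_le_abs (x := θ/2); linarith
    _ = |θ| := by rw [abs_div]; simp; ring

lemma exp_I_sub_exp_I (a b : ℝ) :
    ‖Complex.exp (Complex.I * a) - Complex.exp (Complex.I * b)‖ ≤ |a - b| := by
  have h : Complex.exp (Complex.I * a) - Complex.exp (Complex.I * b)
      = Complex.exp (Complex.I * b) * (Complex.exp (Complex.I * ((a - b : ℝ) : ℂ)) - 1) := by
    rw [mul_sub, ← Complex.exp_add, mul_one]
    push_cast
    ring_nf
  rw [h, norm_mul]
  have h1 : ‖Complex.exp (Complex.I * b)‖ = 1 := by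
    simp [Complex.norm_exp]
  rw [h1, one_mul]
  exact exp_I_sub_one_le _

set_option maxHeartbeats 1000000 in
theorem kernel_asymptotics
    (k : ℝ) (R : ℝ) (hR : 0 < R) :
    ∃ C > (0 : ℝ), ∃ R₁ > R, ∀ y : R3, ‖y‖ ≤ R → ∀ x : R3, R₁ ≤ ‖x‖ →
      ‖g k x y
          - Complex.exp (Complex.I * (k : ℂ) * (‖x‖ : ℝ)) / (4 * (Real.pi : ℂ) * (‖x‖ : ℝ))
            * Complex.exp (-(Complex.I * (k : ℂ)) * (((∑ j, x j * y j) / ‖x‖ : ℝ) : ℂ))‖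
        ≤ C / ‖x‖ ^ 2 := by
  have hπ := Real.pi_pos
  refine ⟨R/(2*Real.pi) + |k| * R^2/(2*Real.pi) + 1, by positivity, 2*R, by linarith, ?_⟩
  intro y hy x hx
  set s := ‖x‖ with hs
  set r := ‖x - y‖ with hrdef
  have hs2 : 2*R ≤ s := hx
  have hspos : 0 < s := by linarith
  have hsr : |s - r| ≤ R := by
    have h := abs_norm_sub_norm_le x (x - y)
    have h2 : x - (x - y) = y := by abel
    rw [h2] at h
    exact h.trans hy
  have hrge : s - R ≤ r := by
    have := abs_le.1 hsr
    linarith [this.2]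
  have hrpos : 0 < r := by linarith
  have h2r : s ≤ 2*r := by linarith
  set p : ℝ := ∑ j, x j * y j with hp
  have hpinner : p = (inner ℝ x y : ℝ) := by
    rw [hp, PiLp.inner_apply]
    simp [RCLike.inner_apply, mul_comm]
  have hCS : |p| ≤ s * R := by
    rw [hpinner]
    calc |(inner ℝ x y : ℝ)| ≤ ‖x‖ * ‖y‖ := abs_real_inner_le_norm x y
      _ ≤ s * R := by
          apply mul_le_mul le_rfl hy (norm_nonneg _) hspos.le
  set t : ℝ := s - p / s with ht
  have hps : p / s ≤ R := by
    rw [div_le_iff₀ hspos]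
    calc p ≤ |p| := le_abs_self p
      _ ≤ s * R := hCS
      _ = R * s := by ring
  have hps' : -R ≤ p / s := by
    rw [le_div_iff₀ hspos] at *
    have : -p ≤ |p| := neg_le_abs p
    nlinarith
  have htpos : 0 < t := by rw [ht]; nlinarith
  have hnormsq : r^2 = s^2 - 2*p + ‖y‖^2 := by
    have h := @norm_sub_sq_real R3 _ _ x y
    rw [← hpinner] at h
    rw [hrdef, hs] at *
    linarith [h]
  have hy2 : ‖y‖^2 ≤ R^2 := by nlinarith [norm_nonneg y]
  have hdiffsq : r^2 - t^2 = ‖y‖^2 - p^2/s^2 := by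
    rw [ht, hnormsq]
    field_simp
    ring
  clear_value s r p t
  have hp2 : p^2 ≤ s^2 * ‖y‖^2 := by
    have h := abs_real_inner_le_norm x y
    rw [← hpinner] at h
    have h2 := pow_le_pow_left₀ (abs_nonneg p) h 2
    rw [_root_.sq_abs] at h2
    calc p^2 ≤ (‖x‖*‖y‖)^2 := h2
      _ = s^2*‖y‖^2 := by rw [hs]; ring
  have hdiff_nonneg : 0 ≤ r^2 - t^2 := by
    rw [hdiffsq]
    have h3 : p^2/s^2 ≤ ‖y‖^2 := by
      rw [div_le_iff₀ (by positivity)]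
      linarith
    linarith
  have hdiff_le : r^2 - t^2 ≤ R^2 := by
    rw [hdiffsq]
    have : 0 ≤ p^2/s^2 := by positivity
    linarith
  have htr : t ≤ r := by nlinarith
  have hrt : |r - t| ≤ 2*R^2/s := by
    rw [_root_.abs_of_nonneg (by linarith : (0:ℝ) ≤ r - t)]
    rw [le_div_iff₀ hspos]
    nlinarith
  -- complex part
  have hsne : (s:ℂ) ≠ 0 := by exact_mod_cast hspos.ne'
  have hrne : (r:ℂ) ≠ 0 := by exact_mod_cast hrpos.ne'
  have hπne : ((Real.pi : ℝ) : ℂ) ≠ 0 := by exact_mod_cast hπ.ne'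
  have hexp : Complex.exp (Complex.I * (k:ℂ) * (s:ℝ))
      * Complex.exp (-(Complex.I * (k:ℂ)) * ((p/s : ℝ) : ℂ))
      = Complex.exp (Complex.I * ((k*t : ℝ) : ℂ)) := by
    rw [← Complex.exp_add]
    congr 1
    rw [ht]
    push_cast
    field_simp
    ring
  have hsplit : g k x y
      - Complex.exp (Complex.I * (k : ℂ) * (s : ℝ)) / (4 * (Real.pi : ℂ) * (s : ℝ))
        * Complex.exp (-(Complex.I * (k : ℂ)) * ((p / s : ℝ) : ℂ))
      = Complex.exp (Complex.I * ((k*r : ℝ):ℂ)) * (((1/(4*Real.pi*r) - 1/(4*Real.pi*s) : ℝ)):ℂ)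
        + (Complex.exp (Complex.I * ((k*r : ℝ):ℂ)) - Complex.exp (Complex.I * ((k*t : ℝ):ℂ)))
          * (((1/(4*Real.pi*s) : ℝ)):ℂ) := by
    rw [div_mul_eq_mul_div, hexp]
    unfold g
    rw [← hrdef]
    push_cast
    ring_nf
  rw [hsplit]
  have hstep := norm_add_le
    (Complex.exp (Complex.I * ((k*r : ℝ):ℂ)) * (((1/(4*Real.pi*r) - 1/(4*Real.pi*s) : ℝ)):ℂ))
    ((Complex.exp (Complex.I * ((k*r : ℝ):ℂ)) - Complex.exp (Complex.I * ((k*t : ℝ):ℂ)))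
      * (((1/(4*Real.pi*s) : ℝ)):ℂ))
  refine hstep.trans ?_
  rw [norm_mul, norm_mul]
  have he1 : ‖Complex.exp (Complex.I * ((k*r : ℝ):ℂ))‖ = 1 := by
    simp [Complex.norm_exp]
  rw [he1, one_mul, Complex.norm_real, Complex.norm_real, Real.norm_eq_abs, Real.norm_eq_abs]
  have hT1 : |1/(4*Real.pi*r) - 1/(4*Real.pi*s)| ≤ (R/(2*Real.pi)) / s^2 := by
    have heq : 1/(4*Real.pi*r) - 1/(4*Real.pi*s) = (s - r)/(4*Real.pi*r*s) := by
      field_simp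
    rw [heq, abs_div, _root_.abs_of_pos (show (0:ℝ) < 4*Real.pi*r*s by positivity)]
    rw [div_le_div_iff₀ (by positivity) (by positivity)]
    calc |s - r| * (s^2) ≤ R * s^2 := mul_le_mul_of_nonneg_right hsr (sq_nonneg s)
      _ = R * (s*s) := by ring
      _ ≤ R * (2*r*s) := mul_le_mul_of_nonneg_left
            (mul_le_mul_of_nonneg_right h2r hspos.le) hR.le
      _ = R/(2*Real.pi) * (4*Real.pi*r*s) := by field_simp; ring
  have hT2 : ‖Complex.exp (Complex.I * ((k*r : ℝ):ℂ))
        - Complex.exp (Complex.I * ((k*t : ℝ):ℂ))‖ * |1/(4*Real.pi*s)|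
      ≤ (|k| * R^2/(2*Real.pi)) / s^2 := by
    have hb := exp_I_sub_exp_I (k*r) (k*t)
    have hb2 : |k*r - k*t| ≤ |k| * (2*R^2/s) := by
      have : |k*r - k*t| = |k| * |r - t| := by rw [← abs_mul]; ring_nf
      rw [this]
      exact mul_le_mul_of_nonneg_left hrt (abs_nonneg k)
    have habs : |1/(4*Real.pi*s)| = 1/(4*Real.pi*s) := _root_.abs_of_pos (by positivity)
    rw [habs]
    calc ‖_‖ * (1/(4*Real.pi*s)) ≤ (|k| * (2*R^2/s)) * (1/(4*Real.pi*s)) := by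
          apply mul_le_mul_of_nonneg_right (hb.trans hb2) (by positivity)
      _ = (|k| * R^2/(2*Real.pi)) / s^2 := by field_simp; ring
  calc |1/(4*Real.pi*r) - 1/(4*Real.pi*s)| + ‖_‖ * |1/(4*Real.pi*s)|
      ≤ (R/(2*Real.pi)) / s^2 + (|k| * R^2/(2*Real.pi)) / s^2 := add_le_add hT1 hT2
    _ ≤ (R/(2*Real.pi) + |k| * R^2/(2*Real.pi) + 1) / s^2 := by
        rw [← add_div]
        apply div_le_div_of_nonneg_right ?_ (by positivity)
        linarith
    _ = _ := rfl
end
end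

section
/- Let k > 0, let D ⊂ ℝ³ be a bounded open set, let F : ℝ³ → ℂ³ and h : ℝ³ → ℂ be continuous with support contained in D, and define u(x) := ∫_D g(x,y) F(y) dy + ∇ₓ ∫_D g(x,y) h(y) dy. Then there exist C > 0 and R₁ > 0 such that for all x with |x| ≥ R₁, writing β := x/|x|: | u(x) − (e^{ik|x|}/(4π|x|))·( ∫_D e^{−ikβ·y} F(y) dy + ikβ ∫_D e^{−ikβ·y} h(y) dy ) | ≤ C/|x|². -/
/- STATEMENT 13: Far-field expansion of the field
u(x) = ∫_D g(x,y) F(y) dy + ∇ₓ ∫_D g(x,y) h(y) dy :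
there are C > 0, R₁ > 0 such that for |x| ≥ R₁, with β = x/|x|,
| u(x) − (e^{ik|x|}/(4π|x|)) ( ∫_D e^{−ikβ·y}F(y) dy + ikβ ∫_D e^{−ikβ·y}h(y) dy ) |
  ≤ C/|x|². -/

noncomputable section

open Real Complex MeasureTheory

/-! ### auxiliary lemmas -/

lemma norm_exp_I_mul (a : ℝ) : ‖Complex.exp (Complex.I * (a : ℂ))‖ = 1 := by
  rw [Complex.norm_exp]
  simp

lemma norm_exp_I_mul' (k a : ℝ) : ‖Complex.exp (Complex.I * (k : ℂ) * (a : ℂ))‖ = 1 := by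
  rw [Complex.norm_exp]
  simp

lemma exp_I_lip (a b : ℝ) :
    ‖Complex.exp (Complex.I * (a : ℂ)) - Complex.exp (Complex.I * (b : ℂ))‖ ≤ |a - b| := by
  have hd : ∀ t : ℝ, t ∈ (Set.univ : Set ℝ) →
      HasDerivWithinAt (fun s : ℝ => Complex.exp (Complex.I * (s : ℂ)))
        (Complex.exp (Complex.I * (t : ℂ)) * Complex.I) Set.univ t := by
    intro t _
    have hid : HasDerivAt (fun s : ℝ => Complex.I * (s : ℂ)) Complex.I t := by
      simpa using (Complex.ofRealCLM.hasDerivAt (x := t)).const_mul Complex.I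
    exact hid.cexp.hasDerivWithinAt
  have := Convex.norm_image_sub_le_of_norm_hasDerivWithin_le hd
    (fun t _ => by rw [norm_mul, norm_exp_I_mul, one_mul, Complex.norm_I]) convex_univ
    (Set.mem_univ b) (Set.mem_univ a)
  simpa [Real.norm_eq_abs] using this

def phi (k : ℝ) (t : ℝ) : ℂ :=
  Complex.exp (Complex.I * k * t) / (4 * (Real.pi : ℂ) * t)

def phi' (k : ℝ) (t : ℝ) : ℂ :=
  (Complex.I * k * Complex.exp (Complex.I * k * t) * (4 * (Real.pi:ℂ) * t)
    - Complex.exp (Complex.I * k * t) * (4 * (Real.pi:ℂ))) / (4 * (Real.pi:ℂ) * t)^2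

lemma hasDerivAt_phi (k : ℝ) {t : ℝ} (ht : t ≠ 0) :
    HasDerivAt (phi k) (phi' k t) t := by
  have hu : HasDerivAt (fun s : ℝ => Complex.exp (Complex.I * k * s))
      (Complex.I * k * Complex.exp (Complex.I * k * t)) t := by
    have hid : HasDerivAt (fun s : ℝ => (Complex.I * k) * (s : ℂ)) (Complex.I * k) t := by
      simpa using (Complex.ofRealCLM.hasDerivAt (x := t)).const_mul (Complex.I * (k:ℂ))
    simpa [mul_comm] using hid.cexp
  have hv : HasDerivAt (fun s : ℝ => 4 * (Real.pi:ℂ) * (s:ℂ)) (4 * (Real.pi:ℂ)) t := by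
    simpa using (Complex.ofRealCLM.hasDerivAt (x := t)).const_mul (4 * (Real.pi:ℂ))
  have hvne : 4 * (Real.pi:ℂ) * (t:ℂ) ≠ 0 := by
    simp [Real.pi_ne_zero, ht, Complex.ofReal_ne_zero]
  exact hu.div hv hvne

lemma norm_phi'_le (k : ℝ) (hk : 0 ≤ k) {t : ℝ} (ht : 0 < t) :
    ‖phi' k t‖ ≤ k / (4*π*t) + 1 / (4*π*t^2) := by
  have hπ := Real.pi_pos
  have h1 : ‖Complex.I * k * Complex.exp (Complex.I * k * t) * (4 * (Real.pi:ℂ) * t)‖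
      = k * (4*π*t) := by
    rw [norm_mul, norm_mul, norm_exp_I_mul']
    simp [_root_.abs_of_nonneg hk, _root_.abs_of_nonneg hπ.le, _root_.abs_of_nonneg ht.le]
  have h2 : ‖Complex.exp (Complex.I * k * t) * (4 * (Real.pi:ℂ))‖ = 4*π := by
    rw [norm_mul, norm_exp_I_mul']
    simp [_root_.abs_of_nonneg hπ.le]
  have h3 : ‖(4 * (Real.pi:ℂ) * t)^2‖ = (4*π*t)^2 := by
    rw [norm_pow, norm_mul]
    simp [_root_.abs_of_nonneg hπ.le, _root_.abs_of_nonneg ht.le]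
  have := norm_sub_le (Complex.I * k * Complex.exp (Complex.I * k * t) * (4 * (Real.pi:ℂ) * t))
    (Complex.exp (Complex.I * k * t) * (4 * (Real.pi:ℂ)))
  calc ‖phi' k t‖ = ‖_ - _‖ / (4*π*t)^2 := by rw [phi', norm_div, h3]
    _ ≤ (k * (4*π*t) + 4*π) / (4*π*t)^2 := by
        apply div_le_div_of_nonneg_right ?_ (by positivity) |>.trans_eq rfl
        · rw [← h1, ← h2]; exact this
    _ = k / (4*π*t) + 1 / (4*π*t^2) := by field_simp

lemma norm_deriv (y x : R3) (hxy : x ≠ y) :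
    HasFDerivAt (fun z : R3 => ‖z - y‖) (‖x - y‖⁻¹ • (innerSL ℝ (x - y))) x := by
  have h1 : HasFDerivAt (fun z : R3 => z - y) (ContinuousLinearMap.id ℝ R3) x :=
    (hasFDerivAt_id x).sub_const y
  have h2 : HasFDerivAt (fun z : R3 => ‖z - y‖^2)
      (2 • (innerSL ℝ (x - y)).comp (ContinuousLinearMap.id ℝ R3)) x := h1.norm_sq
  have hr : (0:ℝ) < ‖x - y‖ := by rw [norm_pos_iff]; exact sub_ne_zero.mpr hxy
  have h3 : HasDerivAt Real.sqrt (1 / (2 * Real.sqrt (‖x - y‖^2))) (‖x - y‖^2) :=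
    Real.hasDerivAt_sqrt (by positivity)
  have h4 := h3.comp_hasFDerivAt x h2
  have he : (fun z : R3 => Real.sqrt (‖z - y‖^2)) = (fun z : R3 => ‖z - y‖) := by
    funext z; rw [Real.sqrt_sq (norm_nonneg _)]
  rw [Function.comp_def, he] at h4
  refine h4.congr_fderiv ?_
  rw [Real.sqrt_sq (norm_nonneg _)]
  ext v
  simp [ContinuousLinearMap.smul_apply]
  ring

def gradg (k : ℝ) (x y : R3) : R3 →L[ℝ] ℂ :=
  (ContinuousLinearMap.smulRight (1 : ℝ →L[ℝ] ℝ) (phi' k ‖x - y‖)).comp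
    (‖x - y‖⁻¹ • (innerSL ℝ (x - y)))

lemma g_hasFDerivAt (k : ℝ) (y x : R3) (hxy : x ≠ y) :
    HasFDerivAt (fun z : R3 => g k z y) (gradg k x y) x := by
  have hr : (0:ℝ) < ‖x - y‖ := by rw [norm_pos_iff]; exact sub_ne_zero.mpr hxy
  have h := ((hasDerivAt_phi k hr.ne').hasFDerivAt).comp x (norm_deriv y x hxy)
  exact h

set_option synthInstance.maxHeartbeats 1000000 in
lemma gradg_apply (k : ℝ) (x y : R3) (v : R3) :
    gradg k x y v = phi' k ‖x - y‖ * ((‖x - y‖⁻¹ * (inner ℝ (x - y) v : ℝ) : ℝ) : ℂ) := by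
  rw [gradg, ContinuousLinearMap.comp_apply, ContinuousLinearMap.smul_apply,
    ContinuousLinearMap.smulRight_apply, ContinuousLinearMap.one_apply]
  rw [smul_eq_mul, Complex.real_smul]
  push_cast
  rw [innerSL_apply_apply]
  ring

lemma gradg_single (k : ℝ) (x y : R3) (i : Fin 3) :
    gradg k x y (EuclideanSpace.single i (1:ℝ))
      = phi' k ‖x - y‖ * (((x i - y i) / ‖x - y‖ : ℝ) : ℂ) := by
  rw [gradg_apply]
  congr 2
  rw [EuclideanSpace.inner_single_right]
  simp [div_eq_inv_mul]

set_option synthInstance.maxHeartbeats 1000000 in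
lemma gradg_norm_le (k : ℝ) (x y : R3) (hxy : x ≠ y) :
    ‖gradg k x y‖ ≤ ‖phi' k ‖x - y‖‖ := by
  have hr : (0:ℝ) < ‖x - y‖ := by rw [norm_pos_iff]; exact sub_ne_zero.mpr hxy
  calc ‖gradg k x y‖ ≤ ‖(ContinuousLinearMap.smulRight (1 : ℝ →L[ℝ] ℝ) (phi' k ‖x - y‖))‖
        * ‖(‖x - y‖⁻¹ • (innerSL ℝ (x - y)))‖ := ContinuousLinearMap.opNorm_comp_le _ _
    _ ≤ ‖phi' k ‖x - y‖‖ * 1 := by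
        apply mul_le_mul ?_ ?_ (norm_nonneg _) (norm_nonneg _)
        · rw [ContinuousLinearMap.norm_smulRight_apply]
          simp [ContinuousLinearMap.one_def, ContinuousLinearMap.norm_id]
        · refine (norm_smul_le (‖x - y‖⁻¹) ((innerSL ℝ) (x - y))).trans ?_
          rw [innerSL_apply_norm]
          simp [_root_.abs_of_nonneg (inv_nonneg.mpr hr.le), inv_mul_cancel₀ hr.ne']
    _ = ‖phi' k ‖x - y‖‖ := mul_one _

lemma sum_eq_inner (x y : R3) : (∑ j, x j * y j) = (inner ℝ x y : ℝ) := by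
  rw [PiLp.inner_apply]
  simp [RCLike.inner_apply, mul_comm]

lemma coord_le_norm (z : R3) (i : Fin 3) : |z i| ≤ ‖z‖ := by
  have h := abs_real_inner_le_norm z (EuclideanSpace.single i (1:ℝ))
  rw [EuclideanSpace.inner_single_right] at h
  simpa using h

lemma geom (M : ℝ) (hM : 0 < M) (x y : R3) (hy : ‖y‖ ≤ M) (hx : 4*M ≤ ‖x‖) :
    ‖x‖ - M ≤ ‖x - y‖ ∧ ‖x - y‖ ≤ ‖x‖ + M ∧ |‖x‖ - ‖x - y‖| ≤ M ∧
      |‖x - y‖ - (‖x‖ - (∑ j, x j * y j)/‖x‖)| ≤ 2*M^2/‖x‖ := by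
  have hR0 : 0 < ‖x‖ := by linarith
  set R := ‖x‖ with hRdef
  set r := ‖x - y‖ with hrdef
  have h1 : R - M ≤ r := by
    have := norm_sub_norm_le x (x - y)
    rw [sub_sub_cancel] at this
    linarith
  have h2 : r ≤ R + M := by
    have := norm_sub_le x y
    linarith
  have h3 : |R - r| ≤ M := by
    have := abs_norm_sub_norm_le x (x - y)
    rw [sub_sub_cancel] at this
    linarith [abs_nonneg (R - r)]
  refine ⟨h1, h2, h3, ?_⟩
  rw [sum_eq_inner]
  set p := (inner ℝ x y : ℝ) with hpdef
  have habs : |p| ≤ R * ‖y‖ := abs_real_inner_le_norm x y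
  have hpR : |p / R| ≤ ‖y‖ := by
    rw [abs_div, _root_.abs_of_pos hR0, div_le_iff₀ hR0]
    linarith [habs]
  set s := R - p / R with hsdef
  have hr0 : 0 < r := by linarith
  have hs0 : 0 < s := by
    have := (abs_le.mp hpR).2
    have hyM : ‖y‖ ≤ M := hy
    simp only [hsdef]
    nlinarith
  have hsum : R ≤ r + s := by
    have := (abs_le.mp hpR).2
    simp only [hsdef]
    nlinarith
  have hsq : r^2 = R^2 - 2*p + ‖y‖^2 := norm_sub_sq_real x y
  have hssq : s^2 = R^2 - 2*p + (p/R)^2 := by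
    simp only [hsdef]
    field_simp
    ring
  have hdiffsq : r^2 - s^2 = ‖y‖^2 - (p/R)^2 := by rw [hsq, hssq]; ring
  have hpos : 0 ≤ r^2 - s^2 := by
    rw [hdiffsq]
    nlinarith [_root_.sq_abs (p/R), abs_nonneg (p/R), hpR, norm_nonneg y]
  have hub : r^2 - s^2 ≤ M^2 := by
    rw [hdiffsq]
    nlinarith [sq_nonneg (p/R), norm_nonneg y]
  have hrs_nonneg : 0 ≤ r - s := by nlinarith
  rw [_root_.abs_of_nonneg hrs_nonneg, le_div_iff₀ hR0] at *
  nlinarith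

lemma core_A {k M R r s : ℝ} (hk : 0 < k) (hM : 0 < M) (hR : 4*M ≤ R)
    (hr : R - M ≤ r) (hRr : |R - r| ≤ M) (hrs : |r - s| ≤ 2*M^2/R) :
    ‖Complex.exp (Complex.I*(k:ℂ)*(r:ℝ))/(4*(Real.pi:ℂ)*(r:ℝ))
      - Complex.exp (Complex.I*(k:ℂ)*(s:ℝ))/(4*(Real.pi:ℂ)*(R:ℝ))‖
      ≤ (2*M + 2*k*M^2)/(4*π)/R^2 := by
  have hπ := Real.pi_pos
  have hR0 : 0 < R := by linarith
  have hr0 : 0 < r := by linarith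
  set A := Complex.exp (Complex.I*(k:ℂ)*(r:ℝ)) with hA
  set B := Complex.exp (Complex.I*(k:ℂ)*(s:ℝ)) with hB
  have hdec : A/(4*(Real.pi:ℂ)*(r:ℝ)) - B/(4*(Real.pi:ℂ)*(R:ℝ))
      = A*(1/(4*(Real.pi:ℂ)*(r:ℝ)) - 1/(4*(Real.pi:ℂ)*(R:ℝ)))
        + (A - B)*(1/(4*(Real.pi:ℂ)*(R:ℝ))) := by ring
  rw [hdec]
  have hnA : ‖A‖ = 1 := norm_exp_I_mul' k r
  -- first term
  have h1 : ‖A*(1/(4*(Real.pi:ℂ)*(r:ℝ)) - 1/(4*(Real.pi:ℂ)*(R:ℝ)))‖ ≤ 2*M/(4*π)/R^2 := by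
    rw [norm_mul, hnA, one_mul]
    have hcast : (1/(4*(Real.pi:ℂ)*(r:ℝ)) - 1/(4*(Real.pi:ℂ)*(R:ℝ)))
        = (((1/(4*π*r) - 1/(4*π*R)) : ℝ) : ℂ) := by push_cast; ring
    rw [hcast, Complex.norm_real, Real.norm_eq_abs]
    have heq : 1/(4*π*r) - 1/(4*π*R) = (R - r)/(4*π*r*R) := by field_simp
    rw [heq, abs_div, _root_.abs_of_pos (by positivity : (0:ℝ) < 4*π*r*R)]
    rw [div_le_div_iff₀ (by positivity) (by positivity)]
    have hrhs : 2*M/(4*π)*(4*π*r*R) = 2*M*r*R := by field_simp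
    rw [hrhs]
    have h1' : |R-r| * R^2 ≤ M * R^2 := mul_le_mul_of_nonneg_right hRr (by positivity)
    nlinarith [h1', mul_pos hM hR0, hr, hR]
  -- second term
  have h2 : ‖(A - B)*(1/(4*(Real.pi:ℂ)*(R:ℝ)))‖ ≤ 2*k*M^2/(4*π)/R^2 := by
    rw [norm_mul]
    have hAB : ‖A - B‖ ≤ 2*k*M^2/R := by
      have e1 : Complex.I*(k:ℂ)*(r:ℝ) = Complex.I*(((k*r : ℝ)):ℂ) := by push_cast; ring
      have e2 : Complex.I*(k:ℂ)*(s:ℝ) = Complex.I*(((k*s : ℝ)):ℂ) := by push_cast; ring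
      rw [hA, hB, e1, e2]
      refine (exp_I_lip (k*r) (k*s)).trans ?_
      have : |k*r - k*s| = k * |r - s| := by
        rw [← mul_sub, abs_mul, _root_.abs_of_pos hk]
      rw [this]
      calc k * |r - s| ≤ k * (2*M^2/R) := by
            exact mul_le_mul_of_nonneg_left hrs hk.le
        _ = 2*k*M^2/R := by ring
    have hn2 : ‖(1/(4*(Real.pi:ℂ)*(R:ℝ)))‖ = 1/(4*π*R) := by
      have : (1/(4*(Real.pi:ℂ)*(R:ℝ))) = (((1/(4*π*R)) : ℝ) : ℂ) := by push_cast; ring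
      rw [this, Complex.norm_real, Real.norm_eq_abs, _root_.abs_of_pos (by positivity)]
    rw [hn2]
    calc ‖A - B‖ * (1/(4*π*R)) ≤ (2*k*M^2/R) * (1/(4*π*R)) := by
          exact mul_le_mul_of_nonneg_right hAB (by positivity)
      _ = 2*k*M^2/(4*π)/R^2 := by field_simp
  calc ‖_ + _‖ ≤ _ + _ := norm_add_le _ _
    _ ≤ 2*M/(4*π)/R^2 + 2*k*M^2/(4*π)/R^2 := add_le_add h1 h2
    _ = (2*M + 2*k*M^2)/(4*π)/R^2 := by ring

lemma core_B {k M R r s w xi : ℝ} (hk : 0 < k) (hM : 0 < M) (hR : 4*M ≤ R)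
    (hr : R - M ≤ r) (hr' : r ≤ R + M) (hRr : |R - r| ≤ M) (hrs : |r - s| ≤ 2*M^2/R)
    (hw : |w| ≤ r) (hwxi : |w - xi| ≤ M) :
    ‖phi' k r * ((w/r : ℝ) : ℂ)
      - Complex.I*(k:ℂ)*((xi/R : ℝ):ℂ) * (Complex.exp (Complex.I*(k:ℂ)*(s:ℝ))/(4*(Real.pi:ℂ)*(R:ℝ)))‖
      ≤ (k*((2*M + 2*k*M^2)/(4*π)) + (2*k*M + 2)/(4*π))/R^2 := by
  have hπ := Real.pi_pos
  have hR0 : 0 < R := by linarith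
  have hr0 : 0 < r := by linarith
  set A := Complex.exp (Complex.I*(k:ℂ)*(r:ℝ)) with hA
  set B := Complex.exp (Complex.I*(k:ℂ)*(s:ℝ)) with hB
  have hrC : ((r:ℝ):ℂ) ≠ 0 := by exact_mod_cast hr0.ne'
  have hπC : ((π:ℝ):ℂ) ≠ 0 := by exact_mod_cast Real.pi_ne_zero
  have hsplit : phi' k r = Complex.I*(k:ℂ)*A/(4*(Real.pi:ℂ)*(r:ℝ)) - A/(4*(Real.pi:ℂ)*((r:ℝ):ℂ)^2) := by
    rw [phi', hA]
    field_simp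
  have hdec : phi' k r * ((w/r : ℝ) : ℂ)
      - Complex.I*(k:ℂ)*((xi/R : ℝ):ℂ) * (B/(4*(Real.pi:ℂ)*(R:ℝ)))
      = Complex.I*(k:ℂ)*((w/r : ℝ):ℂ)*(A/(4*(Real.pi:ℂ)*(r:ℝ)) - B/(4*(Real.pi:ℂ)*(R:ℝ)))
        + Complex.I*(k:ℂ)*(((w/r - xi/R : ℝ)):ℂ)*(B/(4*(Real.pi:ℂ)*(R:ℝ)))
        - ((w/r : ℝ):ℂ)*(A/(4*(Real.pi:ℂ)*((r:ℝ):ℂ)^2)) := by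
    rw [hsplit]
    push_cast
    ring
  rw [hdec]
  have hwr : |w/r| ≤ 1 := by
    rw [abs_div, _root_.abs_of_pos hr0, div_le_one hr0]
    exact hw
  -- term 1
  have h1 : ‖Complex.I*(k:ℂ)*((w/r : ℝ):ℂ)*(A/(4*(Real.pi:ℂ)*(r:ℝ)) - B/(4*(Real.pi:ℂ)*(R:ℝ)))‖
      ≤ k*((2*M + 2*k*M^2)/(4*π))/R^2 := by
    rw [norm_mul, norm_mul, norm_mul, Complex.norm_I, one_mul, Complex.norm_real,
      Real.norm_eq_abs, Complex.norm_real, Real.norm_eq_abs, _root_.abs_of_pos hk]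
    have := core_A (M := M) hk hM hR hr hRr hrs
    calc k * |w/r| * ‖A/(4*(Real.pi:ℂ)*(r:ℝ)) - B/(4*(Real.pi:ℂ)*(R:ℝ))‖
        ≤ k * 1 * ((2*M + 2*k*M^2)/(4*π)/R^2) := by
          refine mul_le_mul (mul_le_mul_of_nonneg_left hwr hk.le) this (norm_nonneg _) ?_
          positivity
      _ = k*((2*M + 2*k*M^2)/(4*π))/R^2 := by ring
  -- term 2
  have h2 : ‖Complex.I*(k:ℂ)*(((w/r - xi/R : ℝ)):ℂ)*(B/(4*(Real.pi:ℂ)*(R:ℝ)))‖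
      ≤ 2*k*M/(4*π)/R^2 := by
    rw [norm_mul, norm_mul, norm_mul, Complex.norm_I, one_mul, Complex.norm_real,
      Real.norm_eq_abs, Complex.norm_real, Real.norm_eq_abs, _root_.abs_of_pos hk]
    have hBnorm : ‖B/(4*(Real.pi:ℂ)*(R:ℝ))‖ = 1/(4*π*R) := by
      rw [norm_div, hB, norm_exp_I_mul']
      have : (4*(Real.pi:ℂ)*(R:ℝ)) = (((4*π*R) : ℝ) : ℂ) := by push_cast; ring
      rw [this, Complex.norm_real, Real.norm_eq_abs, _root_.abs_of_pos (by positivity)]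
    have hfrac : |w/r - xi/R| ≤ 2*M/R := by
      have hid : w/r - xi/R = (w*(R-r) + (w - xi)*r)/(r*R) := by field_simp; ring
      rw [hid, abs_div, _root_.abs_of_pos (by positivity : (0:ℝ) < r*R)]
      rw [div_le_div_iff₀ (by positivity) (by positivity)]
      have hnum : |w*(R-r) + (w - xi)*r| ≤ r*M + M*r := by
        refine (abs_add_le _ _).trans ?_
        rw [abs_mul, abs_mul, _root_.abs_of_pos hr0]
        have b1 : |w| * |R-r| ≤ r * M :=
          mul_le_mul hw hRr (abs_nonneg _) hr0.le
        have b2 : |w - xi| * r ≤ M * r := mul_le_mul_of_nonneg_right hwxi hr0.le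
        linarith
      nlinarith [hnum, mul_pos hr0 hR0]
    rw [hBnorm]
    calc k * |w/r - xi/R| * (1/(4*π*R)) ≤ k * (2*M/R) * (1/(4*π*R)) := by
          refine mul_le_mul_of_nonneg_right (mul_le_mul_of_nonneg_left hfrac hk.le) (by positivity)
      _ = 2*k*M/(4*π)/R^2 := by field_simp
  -- term 3
  have h3 : ‖((w/r : ℝ):ℂ)*(A/(4*(Real.pi:ℂ)*((r:ℝ):ℂ)^2))‖ ≤ 2/(4*π)/R^2 := by
    rw [norm_mul, Complex.norm_real, Real.norm_eq_abs]
    have hAnorm : ‖A/(4*(Real.pi:ℂ)*((r:ℝ):ℂ)^2)‖ = 1/(4*π*r^2) := by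
      rw [norm_div, hA, norm_exp_I_mul']
      have : (4*(Real.pi:ℂ)*((r:ℝ):ℂ)^2) = (((4*π*r^2) : ℝ) : ℂ) := by push_cast; ring
      rw [this, Complex.norm_real, Real.norm_eq_abs, _root_.abs_of_pos (by positivity)]
    rw [hAnorm]
    have hrR : R ≤ 2*r := by nlinarith
    calc |w/r| * (1/(4*π*r^2)) ≤ 1 * (1/(4*π*r^2)) :=
          mul_le_mul_of_nonneg_right hwr (by positivity)
      _ = 1/(4*π*r^2) := one_mul _
      _ ≤ 2/(4*π)/R^2 := by
          rw [div_le_div_iff₀ (by positivity) (by positivity)]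
          have hr2 : 2/(4*π)*(4*π*r^2) = 2*r^2 := by field_simp
          rw [hr2]
          nlinarith [hπ]
  calc ‖_ + _ - _‖ ≤ ‖_ + _‖ + ‖_‖ := norm_sub_le _ _
    _ ≤ (‖_‖ + ‖_‖) + ‖_‖ := by gcongr; exact norm_add_le _ _
    _ ≤ (k*((2*M + 2*k*M^2)/(4*π))/R^2 + 2*k*M/(4*π)/R^2) + 2/(4*π)/R^2 := by
        gcongr
    _ = (k*((2*M + 2*k*M^2)/(4*π)) + (2*k*M + 2)/(4*π))/R^2 := by ring

lemma lead_conv (k : ℝ) (x y : R3) (hx : ‖x‖ ≠ 0) :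
    Complex.exp (Complex.I * (k : ℂ) * (‖x‖ : ℝ)) / (4 * (Real.pi : ℂ) * (‖x‖ : ℝ))
      * Complex.exp (-(Complex.I * (k : ℂ)) * (((∑ j, x j * y j) / ‖x‖ : ℝ) : ℂ))
    = Complex.exp (Complex.I*(k:ℂ)*((‖x‖ - (∑ j, x j * y j)/‖x‖ : ℝ):ℂ))
        / (4*(Real.pi:ℂ)*(‖x‖:ℝ)) := by
  rw [div_mul_eq_mul_div, ← Complex.exp_add]
  congr 2
  push_cast
  ring

lemma est_A (k M : ℝ) (hk : 0 < k) (hM : 0 < M) (x y : R3) (hy : ‖y‖ ≤ M)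
    (hx : 4*M ≤ ‖x‖) :
    ‖g k x y - Complex.exp (Complex.I * (k : ℂ) * (‖x‖ : ℝ)) / (4 * (Real.pi : ℂ) * (‖x‖ : ℝ))
      * Complex.exp (-(Complex.I * (k : ℂ)) * (((∑ j, x j * y j) / ‖x‖ : ℝ) : ℂ))‖
      ≤ (2*M + 2*k*M^2)/(4*π)/‖x‖^2 := by
  have hR0 : (0:ℝ) < ‖x‖ := by linarith
  obtain ⟨h1, h2, h3, h4⟩ := geom M hM x y hy hx
  rw [lead_conv k x y hR0.ne']
  exact core_A hk hM hx h1 h3 h4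

lemma est_B (k M : ℝ) (hk : 0 < k) (hM : 0 < M) (x y : R3) (i : Fin 3) (hy : ‖y‖ ≤ M)
    (hx : 4*M ≤ ‖x‖) :
    ‖phi' k ‖x - y‖ * (((x i - y i) / ‖x - y‖ : ℝ) : ℂ)
      - Complex.I*(k:ℂ)*((x i / ‖x‖ : ℝ):ℂ)
        * (Complex.exp (Complex.I * (k : ℂ) * (‖x‖ : ℝ)) / (4 * (Real.pi : ℂ) * (‖x‖ : ℝ))
          * Complex.exp (-(Complex.I * (k : ℂ)) * (((∑ j, x j * y j) / ‖x‖ : ℝ) : ℂ)))‖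
      ≤ (k*((2*M + 2*k*M^2)/(4*π)) + (2*k*M + 2)/(4*π))/‖x‖^2 := by
  have hR0 : (0:ℝ) < ‖x‖ := by linarith
  obtain ⟨h1, h2, h3, h4⟩ := geom M hM x y hy hx
  rw [lead_conv k x y hR0.ne']
  have hw : |x i - y i| ≤ ‖x - y‖ := by
    have := coord_le_norm (x - y) i
    simpa [PiLp.sub_apply] using this
  have hwxi : |(x i - y i) - x i| ≤ M := by
    have := coord_le_norm y i
    calc |(x i - y i) - x i| = |y i| := by rw [abs_sub_comm]; congr 1; ring
      _ ≤ ‖y‖ := this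
      _ ≤ M := hy
  exact core_B hk hM hx h1 h2 h3 h4 hw hwxi

lemma integrable_helper {E : Type*} [NormedAddCommGroup E] {D : Set R3} (hDm : MeasurableSet D)
    (hvol : volume D < ⊤) {f : R3 → E} (hf : ContinuousOn f D) {C : ℝ}
    (hC : ∀ y ∈ D, ‖f y‖ ≤ C) : IntegrableOn f D := by
  refine ⟨hf.aestronglyMeasurable hDm, ?_⟩
  exact HasFiniteIntegral.restrict_of_bounded (C := C) hvol ((ae_restrict_iff' hDm).mpr (ae_of_all _ hC))

lemma cont_norm_c (z : R3) : Continuous fun y : R3 => ((‖z - y‖ : ℝ) : ℂ) :=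
  Complex.continuous_ofReal.comp ((continuous_const.sub continuous_id).norm)

lemma cont_exp_g (k : ℝ) (z : R3) :
    Continuous fun y : R3 => Complex.exp (Complex.I * (k:ℂ) * ((‖z - y‖ : ℝ) : ℂ)) :=
  Complex.continuous_exp.comp (continuous_const.fun_mul (cont_norm_c z))

lemma contOn_g (k : ℝ) (z : R3) {D : Set R3} (hzD : ∀ y ∈ D, ‖z - y‖ ≠ 0) :
    ContinuousOn (fun y => g k z y) D := by
  apply ContinuousOn.div₀ ((cont_exp_g k z).continuousOn)
    ((continuous_const.fun_mul (cont_norm_c z)).continuousOn)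
  intro y hy
  simp only [mul_ne_zero_iff]
  refine ⟨⟨by norm_num, ?_⟩, ?_⟩
  · exact_mod_cast Real.pi_ne_zero
  · exact_mod_cast hzD y hy

lemma contOn_phi' (k : ℝ) (z : R3) {D : Set R3} (hzD : ∀ y ∈ D, ‖z - y‖ ≠ 0) :
    ContinuousOn (fun y => phi' k ‖z - y‖) D := by
  unfold phi'
  apply ContinuousOn.div₀
  · apply ContinuousOn.fun_sub
    · exact ((continuous_const.fun_mul (cont_exp_g k z)).mul
        (continuous_const.fun_mul (cont_norm_c z))).continuousOn
    · exact ((cont_exp_g k z).mul continuous_const).continuousOn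
  · exact ((continuous_const.fun_mul (cont_norm_c z)).fun_pow 2).continuousOn
  · intro y hy
    apply pow_ne_zero
    simp only [mul_ne_zero_iff]
    refine ⟨⟨by norm_num, ?_⟩, ?_⟩
    · exact_mod_cast Real.pi_ne_zero
    · exact_mod_cast hzD y hy

lemma contOn_gradg (k : ℝ) (z : R3) {D : Set R3} (hzD : ∀ y ∈ D, ‖z - y‖ ≠ 0) :
    ContinuousOn (fun y => gradg k z y) D := by
  unfold gradg
  apply ContinuousOn.clm_comp
  · have hcont : Continuous fun c : ℂ => ContinuousLinearMap.smulRight (1 : ℝ →L[ℝ] ℝ) c :=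
      (ContinuousLinearMap.smulRightL ℝ ℝ ℂ 1).continuous
    exact hcont.comp_continuousOn (contOn_phi' k z hzD)
  · apply ContinuousOn.fun_smul
    · exact ((continuous_const.sub continuous_id).norm.continuousOn).inv₀ hzD
    · exact ((innerSL ℝ (E := R3)).continuous.comp
        (continuous_const.sub continuous_id)).continuousOn

lemma norm_g_le (k : ℝ) (z y : R3) {c : ℝ} (hc : 0 < c) (h : c ≤ ‖z - y‖) :
    ‖g k z y‖ ≤ 1 / (4*π*c) := by
  have hπ := Real.pi_pos
  have hr : (0:ℝ) < ‖z - y‖ := lt_of_lt_of_le hc h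
  rw [g, norm_div, norm_exp_I_mul']
  have : (4*(Real.pi:ℂ)*((‖z - y‖:ℝ):ℂ)) = (((4*π*‖z - y‖) : ℝ) : ℂ) := by push_cast; ring
  rw [this, Complex.norm_real, Real.norm_eq_abs, _root_.abs_of_pos (by positivity)]
  apply div_le_div_of_nonneg_left one_pos.le (by positivity)
  have : 4*π*c ≤ 4*π*‖z - y‖ := by nlinarith
  linarith

lemma norm_E_one (k t : ℝ) : ‖Complex.exp (-(Complex.I*(k:ℂ)) * ((t:ℝ):ℂ))‖ = 1 := by
  have : -(Complex.I*(k:ℂ)) * ((t:ℝ):ℂ) = Complex.I * (((-(k*t)):ℝ):ℂ) := by push_cast; ring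
  rw [this, norm_exp_I_mul]

lemma phi'_far (k M : ℝ) (hk : 0 < k) (hM : 0 < M) {t : ℝ} (h2M : 2*M ≤ t) :
    ‖phi' k t‖ ≤ k/(4*π*(2*M)) + 1/(4*π*(2*M)^2) := by
  have hπ := Real.pi_pos
  have ht0 : (0:ℝ) < t := lt_of_lt_of_le (by positivity) h2M
  refine (norm_phi'_le k hk.le ht0).trans ?_
  have e1 : k/(4*π*t) ≤ k/(4*π*(2*M)) :=
    div_le_div_of_nonneg_left hk.le (by positivity) (by nlinarith)
  have hsq : (2*M)^2 ≤ t^2 := pow_le_pow_left₀ (by positivity) h2M 2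
  have e2 : 1/(4*π*t^2) ≤ 1/(4*π*(2*M)^2) :=
    div_le_div_of_nonneg_left one_pos.le (by positivity) (by nlinarith)
  linarith

lemma Ti_bound (k M : ℝ) (hk : 0 < k) (hM : 0 < M) (x y : R3) (i : Fin 3)
    (h2M : 2*M ≤ ‖x - y‖) :
    ‖phi' k ‖x - y‖ * (((x i - y i)/‖x - y‖ : ℝ):ℂ)‖ ≤ k/(4*π*(2*M)) + 1/(4*π*(2*M)^2) := by
  have ht0 : (0:ℝ) < ‖x - y‖ := lt_of_lt_of_le (by positivity) h2M
  rw [norm_mul, Complex.norm_real, Real.norm_eq_abs]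
  have hwr : |(x i - y i)/‖x - y‖| ≤ 1 := by
    rw [abs_div, _root_.abs_of_pos ht0, div_le_one ht0]
    have := coord_le_norm (x - y) i
    simpa [PiLp.sub_apply] using this
  calc ‖phi' k ‖x - y‖‖ * |(x i - y i)/‖x - y‖| ≤ ‖phi' k ‖x - y‖‖ * 1 :=
        mul_le_mul_of_nonneg_left hwr (norm_nonneg _)
    _ = ‖phi' k ‖x - y‖‖ := mul_one _
    _ ≤ _ := phi'_far k M hk hM h2M

lemma coord_continuous (i : Fin 3) : Continuous fun y : R3 => y i := by
  have := (EuclideanSpace.proj (𝕜 := ℝ) i).continuous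
  exact this

lemma contOn_Ti (k : ℝ) (x : R3) (i : Fin 3) {D : Set R3} (hxD : ∀ y ∈ D, ‖x - y‖ ≠ 0) :
    ContinuousOn (fun y => phi' k ‖x - y‖ * (((x i - y i)/‖x - y‖ : ℝ):ℂ)) D := by
  apply (contOn_phi' k x hxD).fun_mul
  apply Complex.continuous_ofReal.comp_continuousOn
  apply ContinuousOn.div₀
  · exact (continuous_const.sub (coord_continuous i)).continuousOn
  · exact ((continuous_const.sub continuous_id).norm).continuousOn
  · exact hxD

theorem far_field_expansion
    (k : ℝ) (hk : 0 < k) (D : Set R3) (hD : IsOpen D) (hDb : Bornology.IsBounded D)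
    (F : R3 → Fin 3 → ℂ) (h : R3 → ℂ) (hF : Continuous F) (hh : Continuous h)
    (hFs : Function.support F ⊆ D) (hhs : Function.support h ⊆ D) :
    ∃ C > (0 : ℝ), ∃ R₁ > (0 : ℝ), ∀ x : R3, R₁ ≤ ‖x‖ →
      ‖(fun i : Fin 3 =>
          (∫ y in D, g k x y * F y i)
            + pd i (fun z => ∫ y in D, g k z y * h y) x)
        - (fun i : Fin 3 =>
          Complex.exp (Complex.I * (k : ℂ) * (‖x‖ : ℝ)) / (4 * (Real.pi : ℂ) * (‖x‖ : ℝ))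
            * ((∫ y in D,
                  Complex.exp (-(Complex.I * (k : ℂ)) * (((∑ j, x j * y j) / ‖x‖ : ℝ) : ℂ))
                    * F y i)
               + Complex.I * (k : ℂ) * ((x i / ‖x‖ : ℝ) : ℂ) *
                 ∫ y in D,
                   Complex.exp (-(Complex.I * (k : ℂ)) * (((∑ j, x j * y j) / ‖x‖ : ℝ) : ℂ))
                     * h y))‖
        ≤ C / ‖x‖ ^ 2 := by
  have hπ := Real.pi_pos
  obtain ⟨M₀, hM₀⟩ := hDb.subset_closedBall 0
  set M : ℝ := max M₀ 1 with hMdef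
  have hM : (0:ℝ) < M := lt_of_lt_of_le one_pos (le_max_right _ _)
  have hDM : D ⊆ Metric.closedBall 0 M :=
    hM₀.trans (Metric.closedBall_subset_closedBall (le_max_left _ _))
  have hDm : MeasurableSet D := hD.measurableSet
  have hvol : volume D < ⊤ := hDb.measure_lt_top
  have hyM : ∀ y ∈ D, ‖y‖ ≤ M := fun y hy => by
    simpa [mem_closedBall_zero_iff] using hDM hy
  have hFc : HasCompactSupport F := by
    apply HasCompactSupport.intro (isCompact_closedBall (0:R3) M)
    intro y hy
    by_contra hne
    exact hy (hDM (hFs hne))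
  have hhc : HasCompactSupport h := by
    apply HasCompactSupport.intro (isCompact_closedBall (0:R3) M)
    intro y hy
    by_contra hne
    exact hy (hDM (hhs hne))
  obtain ⟨KF, hKF⟩ := hFc.exists_bound_of_continuous hF
  obtain ⟨Kh, hKh⟩ := hhc.exists_bound_of_continuous hh
  have hKF0 : 0 ≤ KF := le_trans (norm_nonneg _) (hKF 0)
  have hKh0 : 0 ≤ Kh := le_trans (norm_nonneg _) (hKh 0)
  have hSA0 : 0 ≤ ((2*M + 2*k*M^2)/(4*π)) := div_nonneg (by nlinarith) (by positivity)
  have hSB0 : 0 ≤ (k*((2*M + 2*k*M^2)/(4*π)) + (2*k*M + 2)/(4*π)) := by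
    have h1 : 0 ≤ k*((2*M + 2*k*M^2)/(4*π)) := mul_nonneg hk.le hSA0
    have h2 : 0 ≤ (2*k*M + 2)/(4*π) := div_nonneg (by nlinarith) (by positivity)
    linarith
  have hV0 : 0 ≤ (volume D).toReal := ENNReal.toReal_nonneg
  have hC0 : (0:ℝ) < (((2*M + 2*k*M^2)/(4*π))*KF + (k*((2*M + 2*k*M^2)/(4*π)) + (2*k*M + 2)/(4*π))*Kh)*(volume D).toReal + 1 := by
    have : 0 ≤ (((2*M + 2*k*M^2)/(4*π))*KF + (k*((2*M + 2*k*M^2)/(4*π)) + (2*k*M + 2)/(4*π))*Kh)*(volume D).toReal :=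
      mul_nonneg (add_nonneg (mul_nonneg hSA0 hKF0) (mul_nonneg hSB0 hKh0)) hV0
    linarith
  refine ⟨(((2*M + 2*k*M^2)/(4*π))*KF + (k*((2*M + 2*k*M^2)/(4*π)) + (2*k*M + 2)/(4*π))*Kh)*(volume D).toReal + 1, hC0, 4*M, by positivity, ?_⟩
  intro x hx
  have hR0 : (0:ℝ) < ‖x‖ := by linarith
  have hzD : ∀ z : R3, 3*M ≤ ‖z‖ → ∀ y ∈ D, 2*M ≤ ‖z - y‖ := by
    intro z hz y hy
    have h1 := hyM y hy
    have h2 := norm_sub_norm_le z y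
    linarith
  have hxD : ∀ y ∈ D, ‖x - y‖ ≠ 0 := fun y hy =>
    ne_of_gt (lt_of_lt_of_le (by positivity) (hzD x (by linarith) y hy))
  have hball3 : ∀ z ∈ Metric.ball x M, 3*M ≤ ‖z‖ := by
    intro z hz
    rw [Metric.mem_ball, dist_eq_norm] at hz
    have h2 : ‖x‖ - ‖z‖ ≤ ‖x - z‖ := norm_sub_norm_le x z
    rw [← norm_sub_rev z x] at h2
    linarith
  have hballne : ∀ z ∈ Metric.ball x M, ∀ y ∈ D, z ≠ y := by
    intro z hz y hy he
    have := hzD z (hball3 z hz) y hy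
    rw [he, sub_self, norm_zero] at this
    linarith
  have hgradbound : ∀ z ∈ Metric.ball x M, ∀ y ∈ D,
      ‖h y • gradg k z y‖ ≤ Kh * (k/(4*π*(2*M)) + 1/(4*π*(2*M)^2)) := by
    intro z hz y hy
    have h2M := hzD z (hball3 z hz) y hy
    have hne : z ≠ y := hballne z hz y hy
    refine (norm_smul_le (h y) (gradg k z y)).trans ?_
    refine mul_le_mul (hKh y) ?_ (norm_nonneg _) hKh0
    exact (gradg_norm_le k z y hne).trans (phi'_far k M hk hM h2M)
  have key : HasFDerivAt (fun z => ∫ y in D, g k z y * h y)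
      (∫ y in D, h y • gradg k x y) x := by
    refine hasFDerivAt_integral_of_dominated_of_fderiv_le (s := Metric.ball x M)
      (F := fun z y => g k z y * h y) (F' := fun z y => h y • gradg k z y)
      (bound := fun _ => Kh * (k/(4*π*(2*M)) + 1/(4*π*(2*M)^2))) (Metric.ball_mem_nhds x hM) ?_ ?_ ?_ ?_ ?_ ?_
    · filter_upwards [Metric.ball_mem_nhds x hM] with z hz
      have hzne : ∀ y ∈ D, ‖z - y‖ ≠ 0 := fun y hy =>
        ne_of_gt (lt_of_lt_of_le (by positivity) (hzD z (hball3 z hz) y hy))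
      exact ((contOn_g k z hzne).fun_mul hh.continuousOn).aestronglyMeasurable hDm
    · apply integrable_helper hDm hvol ((contOn_g k x hxD).fun_mul hh.continuousOn)
        (C := (1/(4*π*(2*M))) * Kh)
      intro y hy
      rw [norm_mul]
      exact mul_le_mul (norm_g_le k x y (by positivity) (hzD x (by linarith) y hy))
        (hKh y) (norm_nonneg _) (by positivity)
    · exact (hh.continuousOn.fun_smul (contOn_gradg k x hxD)).aestronglyMeasurable hDm
    · rw [ae_restrict_iff' hDm]
      exact ae_of_all _ fun y hy z hz => hgradbound z hz y hy
    · rw [integrable_const_iff]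
      right
      exact ⟨by rwa [Measure.restrict_apply_univ]⟩
    · rw [ae_restrict_iff' hDm]
      exact ae_of_all _ fun y hy z hz =>
        (g_hasFDerivAt k y z (hballne z hz y hy)).mul_const (h y)
  have hIntGrad : IntegrableOn (fun y => h y • gradg k x y) D := by
    apply integrable_helper hDm hvol (hh.continuousOn.fun_smul (contOn_gradg k x hxD))
      (C := Kh * (k/(4*π*(2*M)) + 1/(4*π*(2*M)^2)))
    exact fun y hy => hgradbound x (Metric.mem_ball_self hM) y hy
  have hpd : ∀ i : Fin 3, pd i (fun z => ∫ y in D, g k z y * h y) x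
      = ∫ y in D, h y * (phi' k ‖x - y‖ * (((x i - y i)/‖x - y‖ : ℝ):ℂ)) := by
    intro i
    rw [pd, key.fderiv, ContinuousLinearMap.integral_apply hIntGrad]
    refine integral_congr_ae (ae_of_all _ fun y => ?_)
    simp only [ContinuousLinearMap.smul_apply, gradg_single, smul_eq_mul]
  have hEnorm : ∀ y : R3, ‖Complex.exp (-(Complex.I * (k : ℂ)) * (((∑ j, x j * y j) / ‖x‖ : ℝ) : ℂ))‖ = 1 := fun y => norm_E_one k _
  have hEcont : Continuous (fun y : R3 => Complex.exp (-(Complex.I * (k : ℂ)) * (((∑ j, x j * y j) / ‖x‖ : ℝ) : ℂ))) := by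
    apply Complex.continuous_exp.comp
    apply Continuous.fun_mul continuous_const
    apply Complex.continuous_ofReal.comp
    apply Continuous.div_const
    exact continuous_finset_sum _ fun j _ => continuous_const.fun_mul (coord_continuous j)
  have hlead0norm : ‖Complex.exp (Complex.I * (k : ℂ) * (‖x‖ : ℝ)) / (4 * (Real.pi : ℂ) * (‖x‖ : ℝ))‖ = 1/(4*π*‖x‖) := by
    rw [norm_div, norm_exp_I_mul']
    have : (4*(Real.pi:ℂ)*((‖x‖:ℝ):ℂ)) = (((4*π*‖x‖) : ℝ) : ℂ) := by push_cast; ring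
    rw [this, Complex.norm_real, Real.norm_eq_abs, _root_.abs_of_pos (by positivity)]
  rw [pi_norm_le_iff_of_nonneg (div_nonneg hC0.le (by positivity))]
  intro i
  simp only [Pi.sub_apply]
  rw [hpd i]
  have hFi : Continuous fun y => F y i := (continuous_apply i).comp hF
  have hFiKF : ∀ y, ‖F y i‖ ≤ KF := fun y => (norm_le_pi_norm (F y) i).trans (hKF y)
  -- integrability of the four integrands
  have hgi : IntegrableOn (fun y => g k x y * F y i) D := by
    apply integrable_helper hDm hvol ((contOn_g k x hxD).fun_mul hFi.continuousOn)
      (C := (1/(4*π*(2*M))) * KF)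
    intro y hy
    rw [norm_mul]
    exact mul_le_mul (norm_g_le k x y (by positivity) (hzD x (by linarith) y hy))
      (hFiKF y) (norm_nonneg _) (by positivity)
  have hlEi : IntegrableOn (fun y => Complex.exp (Complex.I * (k : ℂ) * (‖x‖ : ℝ)) / (4 * (Real.pi : ℂ) * (‖x‖ : ℝ)) * Complex.exp (-(Complex.I * (k : ℂ)) * (((∑ j, x j * y j) / ‖x‖ : ℝ) : ℂ)) * F y i) D := by
    apply integrable_helper hDm hvol
      (((continuous_const.fun_mul hEcont).fun_mul hFi).continuousOn)
      (C := ‖Complex.exp (Complex.I * (k : ℂ) * (‖x‖ : ℝ)) / (4 * (Real.pi : ℂ) * (‖x‖ : ℝ))‖ * KF)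
    intro y hy
    rw [norm_mul, norm_mul, hEnorm y, mul_one]
    exact mul_le_mul_of_nonneg_left (hFiKF y) (norm_nonneg _)
  have hTiInt : IntegrableOn (fun y => h y * (phi' k ‖x - y‖ * (((x i - y i)/‖x - y‖ : ℝ):ℂ))) D := by
    apply integrable_helper hDm hvol (hh.continuousOn.fun_mul (contOn_Ti k x i hxD))
      (C := Kh * (k/(4*π*(2*M)) + 1/(4*π*(2*M)^2)))
    intro y hy
    rw [norm_mul]
    exact mul_le_mul (hKh y) (Ti_bound k M hk hM x y i (hzD x (by linarith) y hy))
      (norm_nonneg _) hKh0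
  have hclEh : IntegrableOn (fun y => (Complex.I * (k : ℂ) * ((x i / ‖x‖ : ℝ) : ℂ)) * (Complex.exp (Complex.I * (k : ℂ) * (‖x‖ : ℝ)) / (4 * (Real.pi : ℂ) * (‖x‖ : ℝ)) * Complex.exp (-(Complex.I * (k : ℂ)) * (((∑ j, x j * y j) / ‖x‖ : ℝ) : ℂ))) * h y) D := by
    apply integrable_helper hDm hvol
      (((continuous_const.fun_mul (continuous_const.fun_mul hEcont)).fun_mul hh).continuousOn)
      (C := ‖Complex.I * (k : ℂ) * ((x i / ‖x‖ : ℝ) : ℂ)‖ * ‖Complex.exp (Complex.I * (k : ℂ) * (‖x‖ : ℝ)) / (4 * (Real.pi : ℂ) * (‖x‖ : ℝ))‖ * Kh)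
    intro y hy
    simp only [norm_mul]
    rw [hEnorm y, mul_one]
    exact mul_le_mul_of_nonneg_left (hKh y) (by positivity)
  -- pull the constants inside the integrals
  have eqA : Complex.exp (Complex.I * (k : ℂ) * (‖x‖ : ℝ)) / (4 * (Real.pi : ℂ) * (‖x‖ : ℝ)) * ∫ y in D, Complex.exp (-(Complex.I * (k : ℂ)) * (((∑ j, x j * y j) / ‖x‖ : ℝ) : ℂ)) * F y i
      = ∫ y in D, Complex.exp (Complex.I * (k : ℂ) * (‖x‖ : ℝ)) / (4 * (Real.pi : ℂ) * (‖x‖ : ℝ)) * Complex.exp (-(Complex.I * (k : ℂ)) * (((∑ j, x j * y j) / ‖x‖ : ℝ) : ℂ)) * F y i := by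
    rw [← integral_const_mul]
    exact integral_congr_ae (ae_of_all _ fun y => by ring)
  have eqB : Complex.exp (Complex.I * (k : ℂ) * (‖x‖ : ℝ)) / (4 * (Real.pi : ℂ) * (‖x‖ : ℝ)) * ((Complex.I * (k : ℂ) * ((x i / ‖x‖ : ℝ) : ℂ)) * ∫ y in D, Complex.exp (-(Complex.I * (k : ℂ)) * (((∑ j, x j * y j) / ‖x‖ : ℝ) : ℂ)) * h y)
      = ∫ y in D, (Complex.I * (k : ℂ) * ((x i / ‖x‖ : ℝ) : ℂ)) * (Complex.exp (Complex.I * (k : ℂ) * (‖x‖ : ℝ)) / (4 * (Real.pi : ℂ) * (‖x‖ : ℝ)) * Complex.exp (-(Complex.I * (k : ℂ)) * (((∑ j, x j * y j) / ‖x‖ : ℝ) : ℂ))) * h y := by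
    rw [show Complex.exp (Complex.I * (k : ℂ) * (‖x‖ : ℝ)) / (4 * (Real.pi : ℂ) * (‖x‖ : ℝ)) * ((Complex.I * (k : ℂ) * ((x i / ‖x‖ : ℝ) : ℂ)) * ∫ y in D, Complex.exp (-(Complex.I * (k : ℂ)) * (((∑ j, x j * y j) / ‖x‖ : ℝ) : ℂ)) * h y)
        = (Complex.exp (Complex.I * (k : ℂ) * (‖x‖ : ℝ)) / (4 * (Real.pi : ℂ) * (‖x‖ : ℝ)) * (Complex.I * (k : ℂ) * ((x i / ‖x‖ : ℝ) : ℂ))) * ∫ y in D, Complex.exp (-(Complex.I * (k : ℂ)) * (((∑ j, x j * y j) / ‖x‖ : ℝ) : ℂ)) * h y by ring, ← integral_const_mul]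
    exact integral_congr_ae (ae_of_all _ fun y => by ring)
  have hsplit : (∫ y in D, g k x y * F y i) + (∫ y in D, h y * (phi' k ‖x - y‖ * (((x i - y i)/‖x - y‖ : ℝ):ℂ)))
      - Complex.exp (Complex.I * (k : ℂ) * (‖x‖ : ℝ)) / (4 * (Real.pi : ℂ) * (‖x‖ : ℝ)) * ((∫ y in D, Complex.exp (-(Complex.I * (k : ℂ)) * (((∑ j, x j * y j) / ‖x‖ : ℝ) : ℂ)) * F y i) + (Complex.I * (k : ℂ) * ((x i / ‖x‖ : ℝ) : ℂ)) * ∫ y in D, Complex.exp (-(Complex.I * (k : ℂ)) * (((∑ j, x j * y j) / ‖x‖ : ℝ) : ℂ)) * h y)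
      = (∫ y in D, (g k x y - Complex.exp (Complex.I * (k : ℂ) * (‖x‖ : ℝ)) / (4 * (Real.pi : ℂ) * (‖x‖ : ℝ)) * Complex.exp (-(Complex.I * (k : ℂ)) * (((∑ j, x j * y j) / ‖x‖ : ℝ) : ℂ))) * F y i)
        + ∫ y in D, ((phi' k ‖x - y‖ * (((x i - y i)/‖x - y‖ : ℝ):ℂ)) - (Complex.I * (k : ℂ) * ((x i / ‖x‖ : ℝ) : ℂ)) * (Complex.exp (Complex.I * (k : ℂ) * (‖x‖ : ℝ)) / (4 * (Real.pi : ℂ) * (‖x‖ : ℝ)) * Complex.exp (-(Complex.I * (k : ℂ)) * (((∑ j, x j * y j) / ‖x‖ : ℝ) : ℂ)))) * h y := by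
    rw [mul_add, eqA, eqB]
    have e1 : (∫ y in D, (g k x y - Complex.exp (Complex.I * (k : ℂ) * (‖x‖ : ℝ)) / (4 * (Real.pi : ℂ) * (‖x‖ : ℝ)) * Complex.exp (-(Complex.I * (k : ℂ)) * (((∑ j, x j * y j) / ‖x‖ : ℝ) : ℂ))) * F y i)
        = ∫ y in D, (g k x y * F y i - Complex.exp (Complex.I * (k : ℂ) * (‖x‖ : ℝ)) / (4 * (Real.pi : ℂ) * (‖x‖ : ℝ)) * Complex.exp (-(Complex.I * (k : ℂ)) * (((∑ j, x j * y j) / ‖x‖ : ℝ) : ℂ)) * F y i) :=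
      integral_congr_ae (ae_of_all _ fun y => by ring)
    have e2 : (∫ y in D, ((phi' k ‖x - y‖ * (((x i - y i)/‖x - y‖ : ℝ):ℂ)) - (Complex.I * (k : ℂ) * ((x i / ‖x‖ : ℝ) : ℂ)) * (Complex.exp (Complex.I * (k : ℂ) * (‖x‖ : ℝ)) / (4 * (Real.pi : ℂ) * (‖x‖ : ℝ)) * Complex.exp (-(Complex.I * (k : ℂ)) * (((∑ j, x j * y j) / ‖x‖ : ℝ) : ℂ)))) * h y)
        = ∫ y in D, (h y * (phi' k ‖x - y‖ * (((x i - y i)/‖x - y‖ : ℝ):ℂ)) - (Complex.I * (k : ℂ) * ((x i / ‖x‖ : ℝ) : ℂ)) * (Complex.exp (Complex.I * (k : ℂ) * (‖x‖ : ℝ)) / (4 * (Real.pi : ℂ) * (‖x‖ : ℝ)) * Complex.exp (-(Complex.I * (k : ℂ)) * (((∑ j, x j * y j) / ‖x‖ : ℝ) : ℂ))) * h y) :=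
      integral_congr_ae (ae_of_all _ fun y => by ring)
    rw [e1, e2, integral_sub hgi hlEi, integral_sub hTiInt hclEh]
    ring
  rw [hsplit]
  have b1 : ‖∫ y in D, (g k x y - Complex.exp (Complex.I * (k : ℂ) * (‖x‖ : ℝ)) / (4 * (Real.pi : ℂ) * (‖x‖ : ℝ)) * Complex.exp (-(Complex.I * (k : ℂ)) * (((∑ j, x j * y j) / ‖x‖ : ℝ) : ℂ))) * F y i‖
      ≤ ((2*M + 2*k*M^2)/(4*π))/‖x‖^2*KF * (volume D).toReal := by
    apply norm_setIntegral_le_of_norm_le_const hvol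
    intro y hy
    rw [norm_mul]
    exact mul_le_mul (est_A k M hk hM x y (hyM y hy) hx) (hFiKF y) (norm_nonneg _)
      (div_nonneg hSA0 (by positivity))
  have b2 : ‖∫ y in D, ((phi' k ‖x - y‖ * (((x i - y i)/‖x - y‖ : ℝ):ℂ)) - (Complex.I * (k : ℂ) * ((x i / ‖x‖ : ℝ) : ℂ)) * (Complex.exp (Complex.I * (k : ℂ) * (‖x‖ : ℝ)) / (4 * (Real.pi : ℂ) * (‖x‖ : ℝ)) * Complex.exp (-(Complex.I * (k : ℂ)) * (((∑ j, x j * y j) / ‖x‖ : ℝ) : ℂ)))) * h y‖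
      ≤ (k*((2*M + 2*k*M^2)/(4*π)) + (2*k*M + 2)/(4*π))/‖x‖^2*Kh * (volume D).toReal := by
    apply norm_setIntegral_le_of_norm_le_const hvol
    intro y hy
    rw [norm_mul]
    exact mul_le_mul (est_B k M hk hM x y i (hyM y hy) hx) (hKh y) (norm_nonneg _)
      (div_nonneg hSB0 (by positivity))
  calc ‖_ + _‖ ≤ ‖_‖ + ‖_‖ := norm_add_le _ _
    _ ≤ ((2*M + 2*k*M^2)/(4*π))/‖x‖^2*KF * (volume D).toReal + (k*((2*M + 2*k*M^2)/(4*π)) + (2*k*M + 2)/(4*π))/‖x‖^2*Kh * (volume D).toReal :=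
        add_le_add b1 b2
    _ = (((2*M + 2*k*M^2)/(4*π))*KF + (k*((2*M + 2*k*M^2)/(4*π)) + (2*k*M + 2)/(4*π))*Kh)*(volume D).toReal/‖x‖^2 := by ring
    _ ≤ ((((2*M + 2*k*M^2)/(4*π))*KF + (k*((2*M + 2*k*M^2)/(4*π)) + (2*k*M + 2)/(4*π))*Kh)*(volume D).toReal + 1)/‖x‖^2 := by
        gcongr
        linarith
end
end

section
/- (Uniqueness for the inverse problem data) Let k > 0 and R > 0, and let p ∈ L²(B_R), where B_R := {x ∈ ℝ³ : |x| ≤ R}. If ∫_{B_R} e^{ik(α−β)·y} p(y) dy = 0 for all unit vectors α, β ∈ S² = {x ∈ ℝ³ : |x| = 1}, then p = 0 almost everywhere on B_R. -/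
/- STATEMENT 16 (uniqueness for the inverse-problem data): if p ∈ L²(B_R) and
∫_{B_R} e^{ik(α−β)·y} p(y) dy = 0 for all unit vectors α, β, then p = 0 a.e.
on B_R. -/

noncomputable section

open Real Complex MeasureTheory

open RealInnerProductSpace


/-- every vector orthogonal-complemented: explicit unit vector orthogonal to `v`. -/
lemma aux_exists_orth (v : R3) : ∃ u : R3, ‖u‖ = 1 ∧ ⟪v, u⟫ = 0 := by
  by_cases h : v 0 = 0 ∧ v 1 = 0
  · refine ⟨EuclideanSpace.single 0 1, by simp, ?_⟩
    simp [PiLp.inner_apply, RCLike.inner_apply, Fin.sum_univ_three, EuclideanSpace.single_apply,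
      h.1]
  · set u' : R3 := WithLp.toLp 2 ![-v 1, v 0, 0] with hu'
    have hne : u' ≠ 0 := by
      intro hz
      apply h
      constructor
      · have := congrArg (fun w : R3 => w 1) hz
        simpa [hu'] using this
      · have := congrArg (fun w : R3 => w 0) hz
        simpa [hu'] using by simpa [hu'] using congrArg (fun w : R3 => w 0) hz
    refine ⟨‖u'‖⁻¹ • u', ?_, ?_⟩
    · rw [norm_smul, norm_inv, norm_norm]
      exact inv_mul_cancel₀ (norm_ne_zero_iff.mpr hne)
    · rw [inner_smul_right]
      have : ⟪v, u'⟫ = 0 := by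
        simp [PiLp.inner_apply, RCLike.inner_apply, Fin.sum_univ_three, hu']
        ring
      rw [this]; ring

/-- every vector of norm at most 2 is a difference of two unit vectors. -/
lemma aux_geom (v : R3) (hv : ‖v‖ ≤ 2) :
    ∃ α β : R3, ‖α‖ = 1 ∧ ‖β‖ = 1 ∧ α - β = v := by
  obtain ⟨u, hu1, hvu⟩ := aux_exists_orth v
  have h4 : (0:ℝ) ≤ 1 - ‖v‖^2/4 := by nlinarith [norm_nonneg v]
  set w : R3 := Real.sqrt (1 - ‖v‖^2/4) • u with hw
  have hwv : ⟪v, w⟫ = 0 := by rw [hw, inner_smul_right, hvu]; ring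
  have hwn : ‖w‖^2 = 1 - ‖v‖^2/4 := by
    rw [hw, norm_smul, mul_pow, hu1]
    simp [Real.sq_sqrt h4, _root_.abs_of_nonneg (Real.sqrt_nonneg _)]
  refine ⟨(1/2:ℝ) • v + w, -((1/2:ℝ) • v) + w, ?_, ?_, by module⟩
  · have := norm_add_sq_real ((1/2:ℝ) • v) w
    have hi : ⟪(1/2:ℝ) • v, w⟫ = 0 := by rw [real_inner_smul_left, hwv]; ring
    have hn2 : ‖(1/2:ℝ) • v + w‖^2 = 1 := by
      rw [this, hi, norm_smul, hwn]; simp; nlinarith [norm_nonneg v]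
    nlinarith [norm_nonneg ((1/2:ℝ) • v + w)]
  · have hi : ⟪-((1/2:ℝ) • v), w⟫ = 0 := by
      rw [inner_neg_left, real_inner_smul_left, hwv]; ring
    have := norm_add_sq_real (-((1/2:ℝ) • v)) w
    have hn2 : ‖-((1/2:ℝ) • v) + w‖^2 = 1 := by
      rw [this, hi, norm_neg, norm_smul, hwn]; simp; nlinarith [norm_nonneg v]
    nlinarith [norm_nonneg (-((1/2:ℝ) • v) + w)]

/-- a parameterized exponential integral is an entire function of the parameter. -/
lemma aux_entire_int {μ : Measure R3} {p : R3 → ℂ} (hp : Integrable p μ)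
    {c : R3 → ℝ} (hc : Continuous c) {M : ℝ}
    (hM : ∀ᵐ y ∂μ, |c y| ≤ M) :
    Differentiable ℂ (fun w => ∫ y, Complex.exp (w * c y) * p y ∂μ) := by
  intro w₀
  have key := hasDerivAt_integral_of_dominated_loc_of_deriv_le
    (F := fun w y => Complex.exp (w * c y) * p y)
    (F' := fun w y => (Complex.exp (w * c y) * c y) * p y)
    (x₀ := w₀) (s := Metric.ball w₀ 1) (μ := μ)
    (bound := fun y => (Real.exp ((‖w₀‖ + 1) * M) * M) * ‖p y‖)
    (Metric.ball_mem_nhds w₀ one_pos) ?_ ?_ ?_ ?_ ?_ ?_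
  · exact key.2.differentiableAt
  · filter_upwards with w
    exact ((Complex.continuous_exp.comp (continuous_const.mul
      (Complex.continuous_ofReal.comp hc))).aestronglyMeasurable).mul hp.1
  · refine hp.bdd_mul (c := Real.exp ((‖w₀‖ + 1) * M))
      ((Complex.continuous_exp.comp (continuous_const.mul
      (Complex.continuous_ofReal.comp hc))).aestronglyMeasurable) ?_
    filter_upwards [hM] with y hy
    rw [Complex.norm_exp]
    have : (w₀ * (c y : ℂ)).re = w₀.re * c y := by simp
    rw [this]
    apply Real.exp_le_exp.mpr
    calc w₀.re * c y ≤ |w₀.re * c y| := le_abs_self _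
      _ = |w₀.re| * |c y| := abs_mul _ _
      _ ≤ (‖w₀‖ + 1) * M := by
          refine mul_le_mul ((Complex.abs_re_le_norm w₀).trans ?_) hy (abs_nonneg _)
            (by positivity)
          linarith
  · exact (((Complex.continuous_exp.comp (continuous_const.mul
      (Complex.continuous_ofReal.comp hc))).mul
      (Complex.continuous_ofReal.comp hc)).aestronglyMeasurable).mul hp.1
  · filter_upwards [hM] with y hy w hw
    have hwn : ‖w‖ ≤ ‖w₀‖ + 1 := by
      have := mem_ball_iff_norm.mp hw
      calc ‖w‖ = ‖w₀ + (w - w₀)‖ := by ring_nf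
        _ ≤ ‖w₀‖ + ‖w - w₀‖ := norm_add_le _ _
        _ ≤ ‖w₀‖ + 1 := by linarith
    rw [norm_mul, norm_mul, Complex.norm_exp]
    have : (w * (c y : ℂ)).re = w.re * c y := by simp
    rw [this]
    have h1 : Real.exp (w.re * c y) ≤ Real.exp ((‖w₀‖ + 1) * M) := by
      apply Real.exp_le_exp.mpr
      calc w.re * c y ≤ |w.re * c y| := le_abs_self _
        _ = |w.re| * |c y| := abs_mul _ _
        _ ≤ (‖w₀‖ + 1) * M := by
            refine mul_le_mul ?_ hy (abs_nonneg _) (by positivity)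
            exact (Complex.abs_re_le_norm w).trans (by simpa using hwn)
    have h2 : ‖(c y : ℂ)‖ ≤ M := by simpa using hy
    have := mul_le_mul h1 h2 (norm_nonneg _) (Real.exp_pos _).le
    exact mul_le_mul_of_nonneg_right this (norm_nonneg _)
  · exact (hp.norm.const_mul _)
  · filter_upwards with y w _
    exact ((hasDerivAt_mul_const (c y : ℂ)).cexp).mul_const (p y)

/-- identity theorem: an entire function vanishing on a small imaginary segment vanishes. -/
lemma aux_entire_zero {h : ℂ → ℂ} (hd : Differentiable ℂ h) {ε : ℝ} (hε : 0 < ε)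
    (hz : ∀ t : ℝ, |t| ≤ ε → h (Complex.I * t) = 0) : ∀ w, h w = 0 := by
  have ha : AnalyticOnNhd ℂ h Set.univ := analyticOnNhd_univ_iff_differentiable.mpr hd
  have hfreq : ∃ᶠ z in nhdsWithin 0 {(0:ℂ)}ᶜ, h z = 0 := by
    have htt : Filter.Tendsto (fun n : ℕ => Complex.I * ((ε / (n + 1) : ℝ) : ℂ)) Filter.atTop
        (nhdsWithin 0 {(0:ℂ)}ᶜ) := by
      apply tendsto_nhdsWithin_of_tendsto_nhds_of_eventually_within
      · have : Filter.Tendsto (fun n : ℕ => (ε / (n + 1) : ℝ)) Filter.atTop (nhds 0) :=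
          tendsto_const_nhds.div_atTop
            (Filter.tendsto_atTop_add_const_right _ 1 tendsto_natCast_atTop_atTop)
        have := (Complex.continuous_ofReal.tendsto 0).comp this
        simpa using this.const_mul Complex.I
      · filter_upwards with n
        simp only [Set.mem_compl_iff, Set.mem_singleton_iff, mul_eq_zero]
        push_neg
        refine ⟨Complex.I_ne_zero, ?_⟩
        simp only [ne_eq, Complex.ofReal_eq_zero]
        positivity
    refine htt.frequently (Filter.Frequently.of_forall fun n => ?_)
    apply hz
    rw [_root_.abs_of_nonneg (by positivity), div_le_iff₀ (by positivity)]
    nlinarith [hε.le, (Nat.cast_nonneg (α := ℝ) n)]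
  intro w
  exact ha.eqOn_zero_of_preconnected_of_frequently_eq_zero isPreconnected_univ
    (Set.mem_univ 0) hfreq (Set.mem_univ w)


lemma aux_dense_zero {R : ℝ} {p : R3 → ℂ}
    (hpint : Integrable p (volume.restrict (Metric.closedBall (0:R3) R)))
    (hF : ∀ z : R3, ∫ y in Metric.closedBall (0:R3) R,
      Complex.exp (Complex.I * (⟪z, y⟫ : ℝ)) * p y = 0) :
    ∀ G : R3 → ℂ, Continuous G →
      ∫ y in Metric.closedBall (0:R3) R, G y * p y = 0 := by
  set B : Set R3 := Metric.closedBall (0:R3) R with hBdef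
  have hB : MeasurableSet B := measurableSet_closedBall
  haveI : CompactSpace B := isCompact_iff_compactSpace.mp (isCompact_closedBall 0 R)
  set μ' : Measure B := Measure.comap Subtype.val volume with hμ'
  have hemb : MeasurableEmbedding (Subtype.val : B → R3) := MeasurableEmbedding.subtype_coe hB
  have hmap : Measure.map Subtype.val μ' = volume.restrict B := by
    rw [hμ', hemb.map_comap, Subtype.range_coe]
  have hpint' : Integrable (fun x : B => p x) μ' := by
    have := hemb.integrable_map_iff (g := p) (μ := μ')
    rw [hmap] at this
    exact this.mp hpint
  -- the characters
  set e : R3 → C(B, ℂ) := fun z =>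
    ⟨fun x => Complex.exp (Complex.I * (⟪z, (x : R3)⟫ : ℝ)),
      Complex.continuous_exp.comp (continuous_const.mul (Complex.continuous_ofReal.comp
        (continuous_const.inner continuous_subtype_val)))⟩ with he
  have he_apply : ∀ z (x : B), e z x = Complex.exp (Complex.I * (⟪z, (x : R3)⟫ : ℝ)) :=
    fun z x => rfl
  -- the functional
  set Λ : C(B, ℂ) → ℂ := fun g => ∫ x : B, g x * p x ∂μ' with hΛ
  have hint_g : ∀ g : C(B, ℂ), Integrable (fun x : B => g x * p x) μ' := fun g =>
    hpint'.bdd_mul g.continuous.aestronglyMeasurable (Filter.Eventually.of_forall fun x => g.norm_coe_le_norm x)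
  -- Λ is continuous (Lipschitz)
  set C : ℝ := ∫ x : B, ‖p x‖ ∂μ' with hC
  have hC0 : 0 ≤ C := integral_nonneg fun x => norm_nonneg _
  have hΛcont : Continuous Λ := by
    rw [Metric.continuous_iff]
    intro g ε hε
    by_cases hCz : C = 0
    · refine ⟨1, one_pos, fun g' _ => ?_⟩
      have hCz' : ∫ x : B, ‖p (x:R3)‖ ∂μ' = 0 := by rw [← hC]; exact hCz
      have hpz := (integral_eq_zero_iff_of_nonneg (μ := μ') (f := fun x : B => ‖p (x:R3)‖)
          (fun x => norm_nonneg _) hpint'.norm).mp hCz'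
      have hz : ∀ g'' : C(B,ℂ), Λ g'' = 0 := by
        intro g''
        rw [hΛ]
        refine integral_eq_zero_of_ae ?_
        filter_upwards [hpz] with x hx
        have hx0 : p (x:R3) = 0 := by simpa using hx
        simp [hx0]
      simpa [hz] using hε
    · have hCpos : 0 < C := lt_of_le_of_ne hC0 (Ne.symm hCz)
      refine ⟨ε / C, by positivity, fun g' hg' => ?_⟩
      have key : dist (Λ g') (Λ g) ≤ dist g' g * C := by
        rw [dist_eq_norm, hΛ]
        rw [← integral_sub (hint_g g') (hint_g g)]
        have h1 : ‖∫ x : B, (g' x * p x - g x * p x) ∂μ'‖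
            ≤ ∫ x : B, ‖g' x * p x - g x * p x‖ ∂μ' := norm_integral_le_integral_norm _
        refine h1.trans ?_
        have h2 : ∫ x : B, ‖g' x * p x - g x * p x‖ ∂μ'
            ≤ ∫ x : B, dist g' g * ‖p x‖ ∂μ' := by
          refine integral_mono_of_nonneg (Filter.Eventually.of_forall fun x => norm_nonneg _)
            (hpint'.norm.const_mul _) (Filter.Eventually.of_forall fun x => ?_)
          show ‖g' x * p (x:R3) - g x * p (x:R3)‖ ≤ dist g' g * ‖p (x:R3)‖
          rw [← sub_mul, norm_mul]
          have hdd := ContinuousMap.dist_apply_le_dist (f := g') (g := g) x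
          rw [dist_eq_norm] at hdd
          exact mul_le_mul_of_nonneg_right hdd (norm_nonneg _)
        refine h2.trans ?_
        rw [integral_const_mul]
      calc dist (Λ g') (Λ g) ≤ dist g' g * C := key
        _ < (ε / C) * C := by
            exact mul_lt_mul_of_pos_right (by exact hg') hCpos
        _ = ε := by field_simp
  -- Λ vanishes on the characters
  have hΛe : ∀ z, Λ (e z) = 0 := by
    intro z
    rw [hΛ]
    show (∫ x : B, Complex.exp (Complex.I * (⟪z, (x:R3)⟫ : ℝ)) * p (x:R3) ∂μ') = 0
    have h := integral_subtype_comap (μ := volume) hB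
      (fun y => Complex.exp (Complex.I * (⟪z, y⟫ : ℝ)) * p y)
    rw [← hμ'] at h
    rw [h]
    exact hF z
  -- the star subalgebra generated by the characters
  set S : Set C(B, ℂ) := Set.range e with hS
  have hmul : ∀ a ∈ S, ∀ b ∈ S, a * b ∈ S := by
    rintro a ⟨z, rfl⟩ b ⟨w, rfl⟩
    refine ⟨z + w, ?_⟩
    ext x
    simp only [he_apply, ContinuousMap.mul_apply]
    rw [← Complex.exp_add, inner_add_left]
    push_cast
    ring_nf
  have hone : (1 : C(B, ℂ)) ∈ S := by
    refine ⟨0, ?_⟩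
    ext x
    simp [he_apply]
  have hstar : ∀ a ∈ S, star a ∈ S := by
    rintro a ⟨z, rfl⟩
    refine ⟨-z, ?_⟩
    ext x
    simp only [he_apply, ContinuousMap.star_apply, RCLike.star_def]
    rw [← Complex.exp_conj]
    congr 1
    simp [inner_neg_left]
  set Mon : Submonoid C(B, ℂ) :=
    { carrier := S
      mul_mem' := fun ha hb => hmul _ ha _ hb
      one_mem' := hone } with hMon
  set A₀ : Subalgebra ℂ C(B, ℂ) := Algebra.adjoin ℂ S with hA₀
  have hA₀span : (A₀ : Set C(B, ℂ)) = (Submodule.span ℂ S : Set C(B, ℂ)) := by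
    have h1 : Subalgebra.toSubmodule A₀ = Submodule.span ℂ (Submonoid.closure S : Set _) :=
      Algebra.adjoin_eq_span ℂ S
    have h2 : Submonoid.closure S = Mon := Submonoid.closure_eq Mon
    rw [h2] at h1
    calc (A₀ : Set C(B, ℂ)) = (Subalgebra.toSubmodule A₀ : Set C(B, ℂ)) := rfl
      _ = (Submodule.span ℂ (Mon : Set C(B, ℂ)) : Set C(B, ℂ)) := by rw [h1]
      _ = (Submodule.span ℂ S : Set C(B, ℂ)) := rfl
  have hA₀star : ∀ a ∈ A₀, star a ∈ A₀ := by
    intro a ha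
    have hmem : a ∈ Submodule.span ℂ S := by
      have h' : a ∈ (A₀ : Set C(B, ℂ)) := ha
      rw [hA₀span] at h'
      exact h'
    have : star a ∈ Submodule.span ℂ S := by
      refine Submodule.span_induction (p := fun x _ => star x ∈ Submodule.span ℂ S)
        ?_ ?_ ?_ ?_ hmem
      · intro x hx
        exact Submodule.subset_span (hstar x hx)
      · simp
      · intro x y _ _ hx hy
        rw [star_add]; exact Submodule.add_mem _ hx hy
      · intro c x _ hx
        rw [star_smul]; exact Submodule.smul_mem _ _ hx
    rw [← SetLike.mem_coe, hA₀span]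
    exact this
  set A : StarSubalgebra ℂ C(B, ℂ) := { toSubalgebra := A₀, star_mem' := fun ha => hA₀star _ ha }
    with hA
  -- A separates points
  have hsep : A.SeparatesPoints := by
    intro x y hxy
    have hd : ((x : R3) - (y : R3)) ≠ 0 := by
      intro h0
      exact hxy (Subtype.ext (by rwa [sub_eq_zero] at h0))
    set d : R3 := (x : R3) - (y : R3) with hdd
    set z : R3 := (‖d‖^2)⁻¹ • d with hz
    refine ⟨e z, ⟨e z, Algebra.subset_adjoin ⟨z, rfl⟩, rfl⟩, ?_⟩
    simp only [he_apply]
    intro hEq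
    have hinner : (⟪z, (x:R3)⟫ : ℝ) - ⟪z, (y:R3)⟫ = 1 := by
      rw [← inner_sub_right, hz, real_inner_smul_left, ← hdd, real_inner_self_eq_norm_sq]
      field_simp
    obtain ⟨n, hn⟩ := Complex.exp_eq_exp_iff_exists_int.mp hEq
    have hc : Complex.I * (((⟪z, (x:R3)⟫ : ℝ) : ℂ) - ((⟪z, (y:R3)⟫ : ℝ) : ℂ))
        = Complex.I * ((n : ℂ) * (2 * (Real.pi : ℂ))) := by
      rw [mul_sub]
      rw [hn]; ring
    have hc2 : (((⟪z, (x:R3)⟫ : ℝ) : ℂ) - ((⟪z, (y:R3)⟫ : ℝ) : ℂ))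
        = (n : ℂ) * (2 * (Real.pi : ℂ)) := mul_left_cancel₀ Complex.I_ne_zero hc
    have hreal : (1 : ℝ) = (n : ℝ) * (2 * Real.pi) := by
      have h1 : ((1:ℝ) : ℂ) = (n : ℂ) * (2 * (Real.pi : ℂ)) := by
        rw [← hc2]
        have := congrArg (fun r : ℝ => (r : ℂ)) hinner.symm
        push_cast at this ⊢
        exact this
      exact_mod_cast h1
    rcases lt_trichotomy n 0 with hn0 | hn0 | hn0
    · have : (n:ℝ) ≤ -1 := by exact_mod_cast (by omega : n ≤ -1)
      nlinarith [Real.pi_gt_three]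
    · rw [hn0] at hreal; norm_num at hreal
    · have : (1:ℝ) ≤ (n:ℝ) := by exact_mod_cast hn0
      nlinarith [Real.pi_gt_three]
  have hdense : A.topologicalClosure = ⊤ :=
    ContinuousMap.starSubalgebra_topologicalClosure_eq_top_of_separatesPoints A hsep
  -- Λ vanishes on A (span of characters)
  have hΛA : ∀ g ∈ A, Λ g = 0 := by
    intro g hg
    have hmem : g ∈ Submodule.span ℂ S := by
      rw [← SetLike.mem_coe, ← hA₀span]; exact hg
    refine Submodule.span_induction (p := fun x _ => Λ x = 0) ?_ ?_ ?_ ?_ hmem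
    · rintro x ⟨z, rfl⟩; exact hΛe z
    · simp [hΛ]
    · intro a b _ _ ha hb
      have : Λ (a + b) = Λ a + Λ b := by
        rw [hΛ]
        simp only [ContinuousMap.add_apply]
        rw [← integral_add (hint_g a) (hint_g b)]
        congr 1; ext x; ring
      rw [this, ha, hb, add_zero]
    · intro c a _ ha
      have : Λ (c • a) = c * Λ a := by
        rw [hΛ]
        simp only [ContinuousMap.smul_apply]
        rw [← integral_const_mul]
        congr 1; ext x
        simp [smul_eq_mul]; ring
      rw [this, ha, mul_zero]
  -- conclude Λ = 0 everywhere
  have hΛall : ∀ g : C(B, ℂ), Λ g = 0 := by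
    intro g
    have hgcl : g ∈ closure (A : Set C(B, ℂ)) := by
      rw [← StarSubalgebra.topologicalClosure_coe, hdense]
      trivial
    have hsubset : closure (A : Set C(B, ℂ)) ⊆ {g | Λ g = 0} := by
      refine closure_minimal ?_ ?_
      · intro a ha; exact hΛA a ha
      · exact IsClosed.preimage hΛcont isClosed_singleton
    exact hsubset hgcl
  -- back to integrals over B
  intro G hG
  have h := integral_subtype_comap (μ := volume) hB (fun y => G y * p y)
  rw [← hμ'] at h
  rw [← h]
  exact hΛall ⟨fun x : B => G x, hG.comp continuous_subtype_val⟩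

theorem inverse_data_uniqueness
    (k : ℝ) (hk : 0 < k) (R : ℝ) (hR : 0 < R) (p : R3 → ℂ)
    (hp : MemLp p 2 (volume.restrict (Metric.closedBall (0 : R3) R)))
    (hzero : ∀ α β : R3, ‖α‖ = 1 → ‖β‖ = 1 →
      ∫ y in Metric.closedBall (0 : R3) R,
        Complex.exp (Complex.I * (k : ℂ) * ((∑ j, (α j - β j) * y j : ℝ) : ℂ)) * p y = 0) :
    ∀ᵐ y ∂(volume.restrict (Metric.closedBall (0 : R3) R)), p y = 0 := by
  have hB : MeasurableSet (Metric.closedBall (0 : R3) R) := measurableSet_closedBall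
  haveI : IsFiniteMeasure (volume.restrict (Metric.closedBall (0 : R3) R)) :=
    ⟨by rw [Measure.restrict_apply_univ]
        exact (isCompact_closedBall (0:R3) R).measure_lt_top⟩
  have hpint : Integrable p (volume.restrict (Metric.closedBall (0 : R3) R)) :=
    hp.integrable one_le_two
  have hsum : ∀ (v y : R3), (⟪v, y⟫ : ℝ) = ∑ j, v j * y j := fun v y => by
    simp [PiLp.inner_apply, RCLike.inner_apply, mul_comm]
  have hF0 : ∀ z : R3, ‖z‖ ≤ 2*k →
      ∫ y in Metric.closedBall (0 : R3) R,
        Complex.exp (Complex.I * (⟪z, y⟫ : ℝ)) * p y = 0 := by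
    intro z hzn
    obtain ⟨α, β, hα, hβ, hab⟩ := aux_geom (k⁻¹ • z) (by
      rw [norm_smul, norm_inv, Real.norm_eq_abs, _root_.abs_of_pos hk]
      rw [inv_mul_le_iff₀ hk]
      linarith)
    have hzv : z = k • (α - β) := by
      rw [hab, smul_smul, mul_inv_cancel₀ hk.ne', one_smul]
    have heq : ∀ y : R3, Complex.exp (Complex.I * (⟪z, y⟫ : ℝ))
        = Complex.exp (Complex.I * (k : ℂ) * ((∑ j, (α j - β j) * y j : ℝ) : ℂ)) := by
      intro y
      congr 1
      rw [hzv, real_inner_smul_left]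
      have h2 : (⟪α - β, y⟫ : ℝ) = ∑ j, (α j - β j) * y j := by
        rw [hsum (α - β) y]
        congr 1
      rw [h2]
      push_cast
      ring
    simp_rw [heq]
    exact hzero α β hα hβ
  have hFall : ∀ z : R3,
      ∫ y in Metric.closedBall (0 : R3) R,
        Complex.exp (Complex.I * (⟪z, y⟫ : ℝ)) * p y = 0 := by
    intro z
    by_cases hz0 : z = 0
    · exact hF0 z (by rw [hz0]; simp; positivity)
    have hzn : 0 < ‖z‖ := norm_pos_iff.mpr hz0
    have hM : ∀ᵐ y ∂(volume.restrict (Metric.closedBall (0 : R3) R)),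
        |(⟪z, y⟫ : ℝ)| ≤ ‖z‖ * R := by
      filter_upwards [ae_restrict_mem hB] with y hy
      calc |(⟪z, y⟫ : ℝ)| ≤ ‖z‖ * ‖y‖ := abs_real_inner_le_norm z y
        _ ≤ ‖z‖ * R := by
            refine mul_le_mul_of_nonneg_left ?_ (norm_nonneg _)
            rwa [Metric.mem_closedBall, dist_zero_right] at hy
    have hdiff := aux_entire_int hpint
      (c := fun y => (⟪z, y⟫ : ℝ)) (continuous_const.inner continuous_id) hM
    have hseg : ∀ t : ℝ, |t| ≤ 2*k/‖z‖ →
        (fun w => ∫ y, Complex.exp (w * (⟪z, y⟫ : ℝ)) * p y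
          ∂(volume.restrict (Metric.closedBall (0 : R3) R))) (Complex.I * t) = 0 := by
      intro t ht
      have heq : ∀ y : R3, Complex.exp ((Complex.I * t) * (⟪z, y⟫ : ℝ))
          = Complex.exp (Complex.I * (⟪t • z, y⟫ : ℝ)) := by
        intro y
        congr 1
        rw [real_inner_smul_left]
        push_cast
        ring
      simp only [heq]
      refine hF0 (t • z) ?_
      rw [norm_smul, Real.norm_eq_abs]
      calc |t| * ‖z‖ ≤ (2*k/‖z‖) * ‖z‖ :=
            mul_le_mul_of_nonneg_right ht (norm_nonneg _)
        _ = 2*k := by field_simp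
    have hall := aux_entire_zero hdiff (by positivity) hseg
    have := hall Complex.I
    simpa using this
  have hcont := aux_dense_zero hpint hFall
  refine ae_eq_zero_of_integral_contDiff_smul_eq_zero hpint.locallyIntegrable ?_
  intro g hg hgsupp
  have := hcont (fun y => ((g y : ℝ) : ℂ)) (Complex.continuous_ofReal.comp hg.continuous)
  simpa [Complex.real_smul] using this
end
end
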